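/- arXiv:2302.13181 — 3 statements merged into one kernel-verified Lean document; each statement's English description precedes it below -/
import Mathlib

section
/- Let m, n be integers with n/4 ≤ m ≤ 3n/4. Suppose m numbers are chosen independently and uniformly at random from {1,…,n}. Then with probability at least 1 − 2·exp(−n/2048), at least n/8 numbers in {1,…,n} are selected exactly once. -/
set_option maxHeartbeats 1000000

open MeasureTheory Finset
open scoped ENNReal

namespace ManySingletonsAux

variable {n m : ℕ}

/-- number of occurrences of `k` among the draws -/
def cnt (f : Fin m → Fin n) (k : Fin n) : ℕ := #(univ.filter fun i => f i = k)

/-- the set of values never hit -/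
def Zset (f : Fin m → Fin n) : Finset (Fin n) := univ.filter fun k => cnt f k = 0

/-- the number of values hit exactly once -/
def Xcard (f : Fin m → Fin n) : ℕ := #(univ.filter fun k => cnt f k = 1)

lemma sum_cnt (f : Fin m → Fin n) : ∑ k, cnt f k = m := by
  classical
  have h := Finset.card_eq_sum_card_fiberwise (s := (univ : Finset (Fin m)))
    (t := (univ : Finset (Fin n))) (f := f) (fun x _ => mem_univ _)
  simpa [cnt] using h.symm

lemma two_n_le (f : Fin m → Fin n) : 2 * n ≤ m + 2 * #(Zset f) + Xcard f := by
  classical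
  have h2 : ∑ k : Fin n, (if cnt f k = 0 then 2 else 0) = 2 * #(Zset f) := by
    rw [← Finset.sum_filter]
    simp [Zset, mul_comm]
  have h1 : ∑ k : Fin n, (if cnt f k = 1 then 1 else 0) = Xcard f := by
    rw [← Finset.sum_filter]
    simp [Xcard]
  have key : 2 * n ≤ ∑ k : Fin n,
      (cnt f k + ((if cnt f k = 0 then 2 else 0) + if cnt f k = 1 then 1 else 0)) := by
    calc 2 * n = ∑ _k : Fin n, 2 := by simp [mul_comm]
    _ ≤ _ := Finset.sum_le_sum fun k _ => by split_ifs <;> omega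
  rw [Finset.sum_add_distrib, Finset.sum_add_distrib, sum_cnt, h2, h1] at key
  omega

lemma card_avoid (S : Finset (Fin n)) :
    #(univ.filter fun f : Fin m → Fin n => S ⊆ Zset f) = (n - #S) ^ m := by
  classical
  have hiff : ∀ f : Fin m → Fin n, S ⊆ Zset f ↔ ∀ i, f i ∈ Sᶜ := by
    intro f
    constructor
    · intro h i
      by_contra hmem
      simp only [Finset.mem_compl, not_not] at hmem
      have h2 := h hmem
      simp only [Zset, cnt, Finset.mem_filter, Finset.card_eq_zero,
        Finset.filter_eq_empty_iff, mem_univ, true_and] at h2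
      exact h2 trivial rfl
    · intro h k hk
      refine Finset.mem_filter.mpr ⟨mem_univ _, ?_⟩
      rw [cnt, Finset.card_eq_zero, Finset.filter_eq_empty_iff]
      intro i _ hfi
      exact (Finset.mem_compl.1 (h i)) (hfi ▸ hk)
  have heq : (univ.filter fun f : Fin m → Fin n => S ⊆ Zset f)
      = Fintype.piFinset (fun _ : Fin m => Sᶜ) := by
    ext f
    simp [Fintype.mem_piFinset, hiff f]
  rw [heq, Fintype.card_piFinset_const]
  simp [Finset.card_compl]

lemma sum_id :
    ∑ f : Fin m → Fin n, ((21 : ℝ)/20) ^ (#(Zset f))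
      = ∑ k ∈ Finset.range (n+1),
          (n.choose k : ℝ) * ((1:ℝ)/20) ^ k * (((n - k : ℕ) : ℝ)) ^ m := by
  classical
  have h1 : ∀ f : Fin m → Fin n,
      ((21 : ℝ)/20) ^ (#(Zset f)) = ∑ S ∈ (Zset f).powerset, ((1:ℝ)/20) ^ (#S) := by
    intro f
    have h := Finset.prod_add (fun _ : Fin n => (1:ℝ)/20) (fun _ : Fin n => (1:ℝ)) (Zset f)
    simp only [Finset.prod_const, one_pow, mul_one] at h
    rw [show ((21:ℝ)/20) = (1/20 + 1) by norm_num]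
    exact h
  calc ∑ f : Fin m → Fin n, ((21 : ℝ)/20) ^ (#(Zset f))
      = ∑ f : Fin m → Fin n, ∑ S ∈ (univ : Finset (Fin n)).powerset,
          (if S ⊆ Zset f then ((1:ℝ)/20) ^ (#S) else 0) := by
        refine Finset.sum_congr rfl fun f _ => ?_
        rw [h1 f, ← Finset.sum_filter]
        congr 1
        ext S
        simp only [Finset.mem_powerset, Finset.mem_filter]
        exact ⟨fun h => ⟨(h.trans (Finset.subset_univ _)), h⟩, fun h => h.2⟩
    _ = ∑ S ∈ (univ : Finset (Fin n)).powerset, ∑ f : Fin m → Fin n,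
          (if S ⊆ Zset f then ((1:ℝ)/20) ^ (#S) else 0) := Finset.sum_comm
    _ = ∑ S ∈ (univ : Finset (Fin n)).powerset,
          ((1:ℝ)/20) ^ (#S) * (((n - #S : ℕ) : ℝ)) ^ m := by
        refine Finset.sum_congr rfl fun S _ => ?_
        rw [← Finset.sum_filter, Finset.sum_const, card_avoid S, nsmul_eq_mul]
        push_cast
        ring
    _ = _ := by
        have h := Finset.sum_powerset_apply_card
          (fun j => ((1:ℝ)/20) ^ j * (((n - j : ℕ) : ℝ)) ^ m)
          (x := (univ : Finset (Fin n)))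
        simp only [Finset.card_univ, Fintype.card_fin, nsmul_eq_mul] at h
        rw [h]
        refine Finset.sum_congr rfl fun k _ => ?_
        ring

lemma one_sub_inv_nonneg (hn : 0 < n) : (0:ℝ) ≤ 1 - 1/(n:ℝ) := by
  have h1 : (1:ℝ) ≤ (n:ℝ) := by exact_mod_cast hn
  have h2 : (1:ℝ)/(n:ℝ) ≤ 1 := by
    rw [div_le_one (by positivity)]
    exact h1
  linarith

lemma perk (hn : 0 < n) {k : ℕ} (hk : k ≤ n) :
    (n.choose k : ℝ) * ((1:ℝ)/20) ^ k * (((n - k : ℕ) : ℝ)) ^ m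
      ≤ (n:ℝ) ^ m * (((n:ℝ) * (1 - 1/(n:ℝ)) ^ m / 20) ^ k / (Nat.factorial k)) := by
  have hn' : (0:ℝ) < (n:ℝ) := by exact_mod_cast hn
  have h01 : (0:ℝ) ≤ 1 - 1/(n:ℝ) := one_sub_inv_nonneg hn
  -- Bernoulli : n - k ≤ n * (1 - 1/n)^k
  have hb : 1 + (k:ℝ) * (-(1/(n:ℝ))) ≤ (1 + (-(1/(n:ℝ)))) ^ k := by
    refine one_add_mul_le_pow ?_ k
    have : (0:ℝ) < 1/(n:ℝ) := by positivity
    nlinarith [one_sub_inv_nonneg hn]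
  have h0 : (((n - k : ℕ) : ℝ)) ≤ (n:ℝ) * (1 - 1/(n:ℝ)) ^ k := by
    rw [Nat.cast_sub hk]
    have := mul_le_mul_of_nonneg_left hb hn'.le
    calc (n:ℝ) - k = (n:ℝ) * (1 + (k:ℝ) * (-(1/(n:ℝ)))) := by field_simp; ring
    _ ≤ (n:ℝ) * (1 + (-(1/(n:ℝ)))) ^ k := this
    _ = (n:ℝ) * (1 - 1/(n:ℝ)) ^ k := by ring_nf
  have h1 : (((n - k : ℕ) : ℝ)) ^ m ≤ ((n:ℝ) * (1 - 1/(n:ℝ)) ^ k) ^ m :=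
    pow_le_pow_left₀ (by positivity) h0 m
  have h2 : (n.choose k : ℝ) ≤ (n:ℝ) ^ k / (Nat.factorial k) := Nat.choose_le_pow_div k n
  calc (n.choose k : ℝ) * ((1:ℝ)/20) ^ k * (((n - k : ℕ) : ℝ)) ^ m
      ≤ ((n:ℝ) ^ k / (Nat.factorial k)) * ((1:ℝ)/20) ^ k * ((n:ℝ) * (1 - 1/(n:ℝ)) ^ k) ^ m := by
        have hfac : (0:ℝ) < (Nat.factorial k : ℝ) := by exact_mod_cast k.factorial_pos
        gcongr
    _ = (n:ℝ) ^ m * (((n:ℝ) * (1 - 1/(n:ℝ)) ^ m / 20) ^ k / (Nat.factorial k)) := by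
        have hrw : ((n:ℝ) * (1 - 1/(n:ℝ)) ^ m / 20) ^ k
            = (n:ℝ) ^ k * ((1 - 1/(n:ℝ)) ^ k) ^ m / 20 ^ k := by
          rw [div_pow, mul_pow, ← pow_mul, ← pow_mul, mul_comm m k]
        rw [hrw]
        simp only [div_pow, one_pow]
        ring


lemma expE1 : Real.exp (-(1/4) : ℝ) ≤ 384/493 := by
  have h := Real.sum_le_exp_of_nonneg (x := (1/4:ℝ)) (by norm_num) 4
  have h' : (493/384 : ℝ) ≤ Real.exp (1/4) := by
    have hs : ∑ i ∈ Finset.range 4, ((1:ℝ)/4) ^ i / (Nat.factorial i) = 493/384 := by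
      simp [Finset.sum_range_succ, Nat.factorial]
      norm_num
    linarith [hs ▸ h]
  calc Real.exp (-(1/4) : ℝ) = (Real.exp (1/4))⁻¹ := Real.exp_neg _
  _ ≤ ((493:ℝ)/384)⁻¹ := by
      apply inv_anti₀ (by norm_num) h'
  _ = 384/493 := by norm_num

lemma expE3 : Real.exp (-(3/4) : ℝ) ≤ 32/65 := by
  have h := Real.sum_le_exp_of_nonneg (x := (3/4:ℝ)) (by norm_num) 3
  have h' : (65/32 : ℝ) ≤ Real.exp (3/4) := by
    have hs : ∑ i ∈ Finset.range 3, ((3:ℝ)/4) ^ i / (Nat.factorial i) = 65/32 := by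
      simp [Finset.sum_range_succ, Nat.factorial]
      norm_num
    linarith [hs ▸ h]
  calc Real.exp (-(3/4) : ℝ) = (Real.exp (3/4))⁻¹ := Real.exp_neg _
  _ ≤ ((65:ℝ)/32)⁻¹ := by
      apply inv_anti₀ (by norm_num) h'
  _ = 32/65 := by norm_num

lemma logL : (243/5000 : ℝ) ≤ Real.log (21/20) := by
  rw [Real.le_log_iff_exp_le (by norm_num)]
  have hb := Real.exp_bound' (x := (243/5000:ℝ)) (by norm_num) (by norm_num) (n := 3) (by norm_num)
  have hs : ∑ i ∈ Finset.range 3, ((243:ℝ)/5000) ^ i / (Nat.factorial i)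
      = 1 + 243/5000 + (243/5000)^2/2 := by
    norm_num [Finset.sum_range_succ, Nat.factorial]
  rw [hs] at hb
  refine hb.trans ?_
  norm_num [Nat.factorial]

/-- the key counting estimate: few samples have many zero-count values is out;
    i.e. the bad event is exponentially small. -/
lemma count_bad {n m : ℕ} (hn : 0 < n) (h₁ : (n : ℝ) / 4 ≤ m) (h₂ : (m : ℝ) ≤ 3 * n / 4) :
    (#(univ.filter fun f : Fin m → Fin n => ¬ ((n:ℝ)/8 ≤ (Xcard f : ℝ))) : ℝ)
      ≤ Real.exp (-(n : ℝ) / 2048) * (n:ℝ) ^ m := by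
  classical
  have hn' : (0:ℝ) < (n:ℝ) := by exact_mod_cast hn
  set a : ℝ := 15*(n:ℝ)/16 - (m:ℝ)/2 with ha
  set ac : ℕ := ⌈a⌉₊ with hac
  set bad : Finset (Fin m → Fin n) :=
    univ.filter fun f : Fin m → Fin n => ¬ ((n:ℝ)/8 ≤ (Xcard f : ℝ)) with hbaddef
  set ν : ℝ := (n:ℝ) * (1 - 1/(n:ℝ)) ^ m with hν
  have h01 : (0:ℝ) ≤ 1 - 1/(n:ℝ) := one_sub_inv_nonneg hn
  have hν0 : 0 ≤ ν := by positivity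
  -- step 1 : on the bad event, ac ≤ #Zset f
  have hstep : ∀ f ∈ bad, ac ≤ #(Zset f) := by
    intro f hf
    rw [hbaddef, mem_filter] at hf
    have hX : ((Xcard f : ℝ)) < (n:ℝ)/8 := by
      have := hf.2
      linarith [not_le.mp this]
    have h2n : (2*(n:ℝ)) ≤ (m:ℝ) + 2*(#(Zset f):ℝ) + (Xcard f : ℝ) := by
      exact_mod_cast two_n_le f
    have haZ : a ≤ (#(Zset f):ℝ) := by rw [ha]; linarith
    exact Nat.ceil_le.mpr haZ
  -- step 2 : Markov-type counting
  have hmono : (#bad : ℝ) * ((21:ℝ)/20) ^ ac ≤ ∑ f : Fin m → Fin n, ((21:ℝ)/20) ^ (#(Zset f)) := by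
    calc (#bad : ℝ) * ((21:ℝ)/20) ^ ac = ∑ _f ∈ bad, ((21:ℝ)/20) ^ ac := by
          rw [Finset.sum_const, nsmul_eq_mul]
    _ ≤ ∑ f ∈ bad, ((21:ℝ)/20) ^ (#(Zset f)) := by
          refine Finset.sum_le_sum fun f hf => ?_
          exact pow_le_pow_right₀ (by norm_num) (hstep f hf)
    _ ≤ ∑ f : Fin m → Fin n, ((21:ℝ)/20) ^ (#(Zset f)) := by
          refine Finset.sum_le_sum_of_subset_of_nonneg (Finset.subset_univ _)
            (fun f _ _ => by positivity)
  -- step 3 : moment bound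
  have hsum : ∑ f : Fin m → Fin n, ((21:ℝ)/20) ^ (#(Zset f)) ≤ (n:ℝ)^m * Real.exp (ν/20) := by
    rw [sum_id]
    calc ∑ k ∈ Finset.range (n+1), (n.choose k : ℝ) * ((1:ℝ)/20) ^ k * (((n - k : ℕ) : ℝ)) ^ m
        ≤ ∑ k ∈ Finset.range (n+1), (n:ℝ)^m * ((ν/20) ^ k / (Nat.factorial k)) := by
          refine Finset.sum_le_sum fun k hk => ?_
          have hk' : k ≤ n := Nat.lt_succ_iff.mp (Finset.mem_range.mp hk)
          exact perk hn hk'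
    _ = (n:ℝ)^m * ∑ k ∈ Finset.range (n+1), (ν/20) ^ k / (Nat.factorial k) := by
          rw [Finset.mul_sum]
    _ ≤ (n:ℝ)^m * Real.exp (ν/20) := by
          refine mul_le_mul_of_nonneg_left ?_ (by positivity)
          exact Real.sum_le_exp_of_nonneg (by positivity) (n+1)
  -- step 4 : numeric bound  exp(ν/20) ≤ exp(-n/2048) * (21/20)^ac
  have hnum : Real.exp (ν/20) ≤ Real.exp (-(n : ℝ) / 2048) * ((21:ℝ)/20) ^ ac := by
    have hL := logL
    have hL0 : (0:ℝ) < Real.log (21/20) := lt_of_lt_of_le (by norm_num) hL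
    have hacge : a ≤ (ac:ℝ) := Nat.le_ceil a
    have ha9 : 9*(n:ℝ)/16 ≤ a := by rw [ha]; linarith
    have ha0 : 0 ≤ a := le_trans (by positivity) ha9
    -- ν ≤ n * exp(-(m/n))
    have hν1 : ν ≤ (n:ℝ) * Real.exp (-((m:ℝ)/(n:ℝ))) := by
      have hbexp : (1:ℝ) - 1/(n:ℝ) ≤ Real.exp (-(1/(n:ℝ))) := by
        have := Real.add_one_le_exp (-(1/(n:ℝ)))
        linarith
      have hp : ((1:ℝ) - 1/(n:ℝ))^m ≤ (Real.exp (-(1/(n:ℝ))))^m :=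
        pow_le_pow_left₀ h01 hbexp m
      have he : (Real.exp (-(1/(n:ℝ))))^m = Real.exp (-((m:ℝ)/(n:ℝ))) := by
        rw [← Real.exp_nat_mul]
        congr 1
        field_simp
      rw [hν]
      calc (n:ℝ) * (1 - 1/(n:ℝ)) ^ m ≤ (n:ℝ) * (Real.exp (-(1/(n:ℝ))))^m :=
            mul_le_mul_of_nonneg_left hp hn'.le
      _ = (n:ℝ) * Real.exp (-((m:ℝ)/(n:ℝ))) := by rw [he]
    -- the convexity estimate
    have hkey : (n:ℝ) * Real.exp (-((m:ℝ)/(n:ℝ))) / 20 + (n:ℝ)/2048 ≤ a * (243/5000) := by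
      set s : ℝ := (m:ℝ)/(n:ℝ) with hs
      have hs1 : 1/4 ≤ s := by
        rw [hs, le_div_iff₀ hn']
        linarith
      have hs2 : s ≤ 3/4 := by
        rw [hs, div_le_iff₀ hn']
        linarith
      have hca : (0:ℝ) ≤ (3/4 - s)*2 := by linarith
      have hcb : (0:ℝ) ≤ (s - 1/4)*2 := by linarith
      have hcab : (3/4 - s)*2 + (s - 1/4)*2 = 1 := by ring
      have hcx := convexOn_exp.2 (Set.mem_univ (-(1/4):ℝ)) (Set.mem_univ (-(3/4):ℝ))
        hca hcb hcab
      simp only [smul_eq_mul] at hcx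
      have harg : (3/4 - s)*2 * (-(1/4):ℝ) + (s - 1/4)*2 * (-(3/4)) = -s := by ring
      rw [harg] at hcx
      have hexp : Real.exp (-s) ≤ (3/4 - s)*2 * (384/493) + (s - 1/4)*2 * (32/65) := by
        refine hcx.trans ?_
        have c1 : (3/4 - s)*2 * Real.exp (-(1/4):ℝ) ≤ (3/4 - s)*2 * (384/493) :=
          mul_le_mul_of_nonneg_left expE1 (by linarith)
        have c2 : (s - 1/4)*2 * Real.exp (-(3/4):ℝ) ≤ (s - 1/4)*2 * (32/65) :=
          mul_le_mul_of_nonneg_left expE3 (by linarith)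
        linarith
      have h5 : (n:ℝ) * Real.exp (-s) ≤ (n:ℝ) * ((3/4 - s)*2 * (384/493) + (s - 1/4)*2 * (32/65)) :=
        mul_le_mul_of_nonneg_left hexp hn'.le
      have hm : (m:ℝ) = s * (n:ℝ) := by
        rw [hs]; field_simp
      have h6 : (n:ℝ)/4 ≤ (n:ℝ) * s := by
        have := mul_le_mul_of_nonneg_left hs1 hn'.le
        linarith
      rw [ha, hm]
      linarith [h5, h6, hn'.le]
    -- combine
    have hpow : ((21:ℝ)/20) ^ ac = Real.exp ((ac:ℝ) * Real.log (21/20)) := by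
      rw [← Real.log_pow, Real.exp_log (by positivity)]
    rw [hpow, ← Real.exp_add, Real.exp_le_exp]
    have haL : a * (243/5000) ≤ (ac:ℝ) * Real.log (21/20) := by
      calc a * (243/5000) ≤ a * Real.log (21/20) := mul_le_mul_of_nonneg_left hL ha0
      _ ≤ (ac:ℝ) * Real.log (21/20) := mul_le_mul_of_nonneg_right hacge hL0.le
    have : ν/20 ≤ (n:ℝ) * Real.exp (-((m:ℝ)/(n:ℝ))) / 20 := by linarith
    linarith
  -- conclude
  have hpowpos : (0:ℝ) < ((21:ℝ)/20) ^ ac := by positivity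
  have hfinal : (#bad : ℝ) * ((21:ℝ)/20) ^ ac
      ≤ (Real.exp (-(n : ℝ) / 2048) * (n:ℝ)^m) * ((21:ℝ)/20) ^ ac := by
    calc (#bad : ℝ) * ((21:ℝ)/20) ^ ac ≤ (n:ℝ)^m * Real.exp (ν/20) := hmono.trans hsum
    _ ≤ (n:ℝ)^m * (Real.exp (-(n : ℝ) / 2048) * ((21:ℝ)/20) ^ ac) :=
          mul_le_mul_of_nonneg_left hnum (by positivity)
    _ = (Real.exp (-(n : ℝ) / 2048) * (n:ℝ)^m) * ((21:ℝ)/20) ^ ac := by ring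
  exact le_of_mul_le_mul_right hfinal hpowpos

end ManySingletonsAux

open ManySingletonsAux

/-- If `m` numbers with `n/4 ≤ m ≤ 3n/4` are chosen independently and uniformly at random
from `{1, …, n}`, then with probability at least `1 − 2·exp(−n/2048)` at least `n/8`
numbers are selected exactly once. -/
theorem many_singletons_whp (n m : ℕ) (hn : 0 < n)
    (h₁ : (n : ℝ) / 4 ≤ m) (h₂ : (m : ℝ) ≤ 3 * n / 4) :
    1 - 2 * Real.exp (-(n : ℝ) / 2048) ≤
      ((((n : ℝ≥0∞) ^ m)⁻¹ • (Measure.count : Measure (Fin m → Fin n)))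
        {f | (n : ℝ) / 8 ≤
          ((Finset.univ.filter (fun k : Fin n =>
            (Finset.univ.filter (fun i : Fin m => f i = k)).card = 1)).card : ℝ)}).toReal := by
  classical
  have hn' : (0:ℝ) < (n:ℝ) := by exact_mod_cast hn
  set P : (Fin m → Fin n) → Prop := fun f => (n : ℝ) / 8 ≤
      ((Finset.univ.filter (fun k : Fin n =>
        (Finset.univ.filter (fun i : Fin m => f i = k)).card = 1)).card : ℝ) with hP
  have hset : {f : Fin m → Fin n | P f} = ↑(univ.filter P) := by
    ext f
    simp
  have hXeq : ∀ f : Fin m → Fin n, P f ↔ (n:ℝ)/8 ≤ (Xcard f : ℝ) := by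
    intro f
    rw [hP]
    rfl
  -- cardinality of the whole space
  have hcardU : Fintype.card (Fin m → Fin n) = n ^ m := by
    simp [Fintype.card_fun]
  have hsplit : #(univ.filter P) + #(univ.filter fun f => ¬ P f) = n ^ m := by
    rw [Finset.card_filter_add_card_filter_not, Finset.card_univ, hcardU]
  have hbadle : (#(univ.filter fun f => ¬ P f) : ℝ) ≤ Real.exp (-(n : ℝ) / 2048) * (n:ℝ) ^ m := by
    have h := ManySingletonsAux.count_bad (m := m) hn h₁ h₂
    have hfe : (univ.filter fun f : Fin m → Fin n => ¬ P f)
        = (univ.filter fun f : Fin m → Fin n => ¬ ((n:ℝ)/8 ≤ (Xcard f : ℝ))) := by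
      apply Finset.filter_congr
      intro f _
      rw [hXeq f]
    rw [hfe]
    exact h
  -- compute the measure
  have hμ : ((((n : ℝ≥0∞) ^ m)⁻¹ • (Measure.count : Measure (Fin m → Fin n)))
      {f | P f}).toReal = (#(univ.filter P) : ℝ) / (n:ℝ)^m := by
    rw [Measure.smul_apply, smul_eq_mul, hset, Measure.count_apply_finset]
    rw [ENNReal.toReal_mul, ENNReal.toReal_inv]
    simp [div_eq_inv_mul]
  rw [hμ]
  have hnm : (0:ℝ) < (n:ℝ)^m := by positivity
  have hgood : (#(univ.filter P) : ℝ) = (n:ℝ)^m - (#(univ.filter fun f => ¬ P f) : ℝ) := by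
    have := hsplit
    have hcast : (#(univ.filter P) : ℝ) + (#(univ.filter fun f => ¬ P f) : ℝ) = (n:ℝ)^m := by
      exact_mod_cast this
    linarith
  have hepos : (0:ℝ) < Real.exp (-(n : ℝ) / 2048) := Real.exp_pos _
  rw [le_div_iff₀ hnm]
  nlinarith [hbadle, hepos, hnm, hgood]
end

section
/- Let p_T be a probability distribution supported on a disjoint union of 2κ unit circles C₁,…,C_{2κ} in ℝ^d (pairwise distance at least 3), uniform on each circle, with p_T(C_i) = 1/(3κ) for i ∈ T and p_T(C_i) = 2/(3κ) for i ∉ T, where |T| = κ. Then p_T is 1-regular, and for ε = 1/3 its regularity constant satisfies 1/(9κ) ≤ (p_T)_ε ≤ 2/(3κ). -/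
open MeasureTheory Metric
open scoped ENNReal

def msupport {d : ℕ} (p : Measure (EuclideanSpace ℝ (Fin d))) :
    Set (EuclideanSpace ℝ (Fin d)) :=
  {x | ∀ r : ℝ, 0 < r → 0 < p (ball x r)}

/-- `c` is a valid regularity constant `p_ε` witnessing `k`-regularity of `p` at scale `ε`. -/
def ValidReg {d : ℕ} (p : Measure (EuclideanSpace ℝ (Fin d))) (k : ℕ) (ε c : ℝ) : Prop :=
  0 < c ∧ c ≤ 1 ∧
  ∀ x ∈ msupport p, ∀ s r : ℝ, 0 < s → s < r →
    (p (closedBall x r)).toReal ≤ c →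
    (1 + ε / 3)⁻¹ * (r / s) ^ k ≤
        (p (closedBall x r)).toReal / (p (closedBall x s)).toReal ∧
    (p (closedBall x r)).toReal / (p (closedBall x s)).toReal ≤
        (1 + ε / 3) * (r / s) ^ k

lemma le_arcsin' {t : ℝ} (h0 : 0 ≤ t) (h1 : t ≤ 1) : t ≤ Real.arcsin t := by
  have hπ := Real.pi_gt_three
  calc t = Real.arcsin (Real.sin t) := (Real.arcsin_sin (by linarith) (by linarith)).symm
    _ ≤ Real.arcsin t := by
        apply Real.strictMonoOn_arcsin.monotoneOn
          ⟨by linarith [Real.neg_one_le_sin t], Real.sin_le_one t⟩ ⟨by linarith, h1⟩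
          (Real.sin_le h0)

lemma arcsin_le' {t e : ℝ} (h0 : 0 ≤ t) (he : 0 < e) (h1 : (1+e)*t ≤ 1)
    (h2 : (1+e)^3 * t^2 ≤ 4*e) : Real.arcsin t ≤ (1+e)*t := by
  have hπ := Real.pi_gt_three
  rcases eq_or_lt_of_le h0 with h|h
  · rw [← h, Real.arcsin_zero]; positivity
  · have hx : (0:ℝ) < (1+e)*t := by positivity
    have hs := Real.sin_gt_sub_cube hx
    have ht : t ≤ Real.sin ((1+e)*t) := by nlinarith [mul_le_mul_of_nonneg_right h2 h0]
    have ht1 : t ≤ 1 := le_trans (by nlinarith) h1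
    calc Real.arcsin t ≤ Real.arcsin (Real.sin ((1+e)*t)) := by
          apply Real.strictMonoOn_arcsin.monotoneOn ⟨by linarith, ht1⟩
            ⟨by linarith [Real.neg_one_le_sin ((1+e)*t)], Real.sin_le_one _⟩ ht
      _ = (1+e)*t := Real.arcsin_sin (by linarith) (by linarith)

lemma arc_vol (θ0 b : ℝ) (hb0 : 0 ≤ b) (hbπ : b < Real.pi) :
    volume {θ : ℝ | θ ∈ Set.Ioc 0 (2*Real.pi) ∧ Real.cos b ≤ Real.cos (θ - θ0)}
      = ENNReal.ofReal (2*b) := by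
  have hπ := Real.pi_pos
  set A : Set ℝ := {θ | Real.cos b ≤ Real.cos (θ - θ0)} with hA
  have hAm : MeasurableSet A := measurableSet_le measurable_const (by fun_prop)
  have hinv : ∀ g : AddSubgroup.zmultiples (2*Real.pi), (fun x => (g:ℝ) +ᵥ x) ⁻¹' A = A := by
    rintro ⟨g, hg⟩
    obtain ⟨n, rfl⟩ := hg
    ext x
    simp only [Set.mem_preimage, vadd_eq_add, hA, Set.mem_setOf_eq]
    rw [show (n • (2*Real.pi)) + x - θ0 = (x - θ0) + n*(2*Real.pi) by rw [zsmul_eq_mul]; ring,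
      Real.cos_add_int_mul_two_pi]
  have h1 := isAddFundamentalDomain_Ioc (T := 2*Real.pi) (by linarith) 0 volume
  have h2 := isAddFundamentalDomain_Ioc (T := 2*Real.pi) (by linarith) (θ0 - Real.pi) volume
  have key := h1.measure_set_eq h2 hAm hinv
  have hset : {θ : ℝ | θ ∈ Set.Ioc 0 (2*Real.pi) ∧ Real.cos b ≤ Real.cos (θ - θ0)}
      = A ∩ Set.Ioc 0 (0 + 2*Real.pi) := by
    ext θ; simp only [Set.mem_inter_iff, Set.mem_setOf_eq, zero_add, hA]; tauto
  have hset2 : A ∩ Set.Ioc (θ0 - Real.pi) (θ0 - Real.pi + 2*Real.pi)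
      = Set.Icc (θ0 - b) (θ0 + b) := by
    ext θ
    simp only [Set.mem_inter_iff, Set.mem_setOf_eq, Set.mem_Ioc, Set.mem_Icc, hA]
    constructor
    · rintro ⟨hcos, hθ1, hθ2⟩
      have habs : |θ - θ0| ≤ b := by
        by_contra hcon
        push_neg at hcon
        have h3 : |θ - θ0| ≤ Real.pi := by
          rw [abs_le]; constructor <;> [linarith; linarith]
        have := Real.cos_lt_cos_of_nonneg_of_le_pi hb0 h3 hcon
        rw [Real.cos_abs] at this
        linarith
      rw [abs_le] at habs
      constructor <;> linarith [habs.1, habs.2]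
    · rintro ⟨hθ1, hθ2⟩
      have habs : |θ - θ0| ≤ b := by rw [abs_le]; constructor <;> linarith
      refine ⟨?_, by linarith, by linarith⟩
      have := Real.cos_le_cos_of_nonneg_of_le_pi (abs_nonneg (θ - θ0)) hbπ.le habs
      rwa [Real.cos_abs] at this
  rw [hset, key, hset2, Real.volume_Icc]
  ring_nf

lemma dist_circ {E : Type*} [NormedAddCommGroup E] [InnerProductSpace ℝ E]
    {u v : E} (hu : ‖u‖ = 1) (hv : ‖v‖ = 1) (huv : (inner ℝ u v : ℝ) = 0) (c : E) (θ θ' : ℝ) :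
    dist (c + Real.cos θ • u + Real.sin θ • v) (c + Real.cos θ' • u + Real.sin θ' • v)
      = 2 * |Real.sin ((θ - θ') / 2)| := by
  rw [dist_eq_norm]
  have hdiff : c + Real.cos θ • u + Real.sin θ • v - (c + Real.cos θ' • u + Real.sin θ' • v)
      = (Real.cos θ - Real.cos θ') • u + (Real.sin θ - Real.sin θ') • v := by
    module
  rw [hdiff]
  have hsq : ‖(Real.cos θ - Real.cos θ') • u + (Real.sin θ - Real.sin θ') • v‖^2
      = (2 * |Real.sin ((θ - θ') / 2)|)^2 := by
    rw [norm_add_sq_real, norm_smul, norm_smul, real_inner_smul_left, real_inner_smul_right, huv,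
      hu, hv]
    simp only [Real.norm_eq_abs, mul_one, mul_zero, add_zero, sq_abs]
    have h1 : Real.cos (θ - θ') = Real.cos θ * Real.cos θ' + Real.sin θ * Real.sin θ' :=
      Real.cos_sub θ θ'
    have h2 : Real.sin ((θ - θ') / 2)^2 = 1/2 - Real.cos (θ - θ')/2 := by
      have := Real.sin_sq_eq_half_sub ((θ - θ')/2)
      rwa [show 2 * ((θ - θ')/2) = θ - θ' by ring] at this
    have h3 := Real.sin_sq_add_cos_sq θ
    have h4 := Real.sin_sq_add_cos_sq θ'
    have h5 : |Real.sin ((θ - θ') / 2)|^2 = Real.sin ((θ - θ') / 2)^2 := sq_abs _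
    nlinarith [sq_abs (Real.cos θ - Real.cos θ'), sq_abs (Real.sin θ - Real.sin θ')]
  have h0 : (0:ℝ) ≤ 2 * |Real.sin ((θ - θ') / 2)| := by positivity
  nlinarith [norm_nonneg ((Real.cos θ - Real.cos θ') • u + (Real.sin θ - Real.sin θ') • v), hsq]

/-- weight function -/
noncomputable def wt (κ : ℕ) (T : Finset (Fin (2*κ))) (i : Fin (2*κ)) : ℝ :=
  if i ∈ T then 1/(3*(κ:ℝ)) else 2/(3*(κ:ℝ))

set_option maxHeartbeats 1000000 in
/-- The distribution `p_T` on `2κ` well-separated unit circles (mass `1/(3κ)` on circles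
indexed by `T`, `2/(3κ)` on the others, uniform on each circle) is `1`-regular, and for
`ε = 1/3` its regularity constant satisfies `1/(9κ) ≤ (p_T)_ε ≤ 2/(3κ)`. -/
theorem pT_is_one_regular (d κ : ℕ) (hκ : 0 < κ)
    (T : Finset (Fin (2 * κ))) (hT : T.card = κ)
    (c u v : Fin (2 * κ) → EuclideanSpace ℝ (Fin d))
    (hu : ∀ i, ‖u i‖ = 1) (hv : ∀ i, ‖v i‖ = 1) (huv : ∀ i, (inner ℝ (u i) (v i) : ℝ) = 0)
    (circ : Fin (2 * κ) → ℝ → EuclideanSpace ℝ (Fin d))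
    (hcirc : ∀ i θ, circ i θ = c i + Real.cos θ • u i + Real.sin θ • v i)
    (hsep : ∀ i j θ θ', i ≠ j → 3 ≤ dist (circ i θ) (circ j θ'))
    (pT : Measure (EuclideanSpace ℝ (Fin d)))
    (hpT : pT = ∑ i : Fin (2 * κ),
      (ENNReal.ofReal (if i ∈ T then (1 : ℝ) / (3 * κ) else 2 / (3 * κ))) •
        ((ENNReal.ofReal (2 * Real.pi))⁻¹ •
          Measure.map (circ i) (volume.restrict (Set.Ioc 0 (2 * Real.pi))))) :
    (∀ ε : ℝ, 0 < ε → ∃ ce : ℝ, ValidReg pT 1 ε ce) ∧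
    ValidReg pT 1 (1 / 3) (1 / (9 * κ)) ∧
    (∀ ce : ℝ, ValidReg pT 1 (1 / 3) ce → ce ≤ 2 / (3 * κ)) := by
  have hπ := Real.pi_pos
  have hπ3 := Real.pi_gt_three
  have hπ4 := Real.pi_lt_d2
  have hκR : (0:ℝ) < (κ:ℝ) := by exact_mod_cast hκ
  have hκ1 : (1:ℝ) ≤ (κ:ℝ) := by exact_mod_cast hκ
  have hw_lb : ∀ i, 1/(3*(κ:ℝ)) ≤ wt κ T i := by
    intro i; unfold wt; split_ifs
    · exact le_rfl
    · rw [div_le_div_iff₀ (by positivity) (by positivity)]; nlinarith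
  have hw_ub : ∀ i, wt κ T i ≤ 2/(3*(κ:ℝ)) := by
    intro i; unfold wt; split_ifs
    · rw [div_le_div_iff₀ (by positivity) (by positivity)]; nlinarith
    · exact le_rfl
  have hw_pos : ∀ i, 0 < wt κ T i := fun i => lt_of_lt_of_le (by positivity) (hw_lb i)
  have hcont : ∀ i, Continuous (circ i) := by
    intro i
    have : circ i = fun θ => c i + Real.cos θ • u i + Real.sin θ • v i := funext (hcirc i)
    rw [this]; fun_prop
  have hmeas : ∀ i, Measurable (circ i) := fun i => (hcont i).measurable
  have hdist : ∀ i θ θ', dist (circ i θ) (circ i θ') = 2*|Real.sin ((θ - θ')/2)| := by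
    intro i θ θ'; rw [hcirc, hcirc]; exact dist_circ (hu i) (hv i) (huv i) (c i) θ θ'
  have hpT_apply : ∀ A : Set (EuclideanSpace ℝ (Fin d)), MeasurableSet A →
      pT A = ∑ j : Fin (2*κ), ENNReal.ofReal (wt κ T j) *
        ((ENNReal.ofReal (2*Real.pi))⁻¹ * volume ((circ j) ⁻¹' A ∩ Set.Ioc 0 (2*Real.pi))) := by
    intro A hA
    rw [hpT, Measure.finset_sum_apply]
    refine Finset.sum_congr rfl (fun j _ => ?_)
    rw [Measure.smul_apply, Measure.smul_apply, Measure.map_apply (hmeas j) hA,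
      Measure.restrict_apply (hmeas j hA), smul_eq_mul, smul_eq_mul]
    rfl
  have hzero : ∀ (i j : Fin (2*κ)) (θ0 s : ℝ), s < 3 → j ≠ i →
      (circ j) ⁻¹' (closedBall (circ i θ0) s) = ∅ := by
    intro i j θ0 s hs3 hj
    ext θ
    simp only [Set.mem_preimage, mem_closedBall, Set.mem_empty_iff_false, iff_false, not_le]
    have := hsep j i θ θ0 hj
    linarith
  have hmass : ∀ (i : Fin (2*κ)) (θ0 s : ℝ), 0 < s → s < 2 →
      pT (closedBall (circ i θ0) s)
        = ENNReal.ofReal (wt κ T i) * ((ENNReal.ofReal (2*Real.pi))⁻¹ *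
            ENNReal.ofReal (4 * Real.arcsin (s/2))) := by
    intro i θ0 s hs hs2
    rw [hpT_apply _ measurableSet_closedBall, Finset.sum_eq_single i]
    · have hcb : Real.cos (2*Real.arcsin (s/2)) = 1 - s^2/2 := by
        have h := Real.sin_sq_eq_half_sub (Real.arcsin (s/2))
        rw [Real.sin_arcsin (by linarith) (by linarith)] at h
        linear_combination 2*h
      have hpre : (circ i) ⁻¹' (closedBall (circ i θ0) s) ∩ Set.Ioc 0 (2*Real.pi)
          = {θ | θ ∈ Set.Ioc 0 (2*Real.pi) ∧ Real.cos (2*Real.arcsin (s/2)) ≤ Real.cos (θ - θ0)} := by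
        ext θ
        simp only [Set.mem_inter_iff, Set.mem_preimage, mem_closedBall, Set.mem_setOf_eq]
        rw [hdist, hcb]
        have h2z : Real.sin ((θ - θ0)/2)^2 = 1/2 - Real.cos (θ - θ0)/2 := by
          have := Real.sin_sq_eq_half_sub ((θ - θ0)/2)
          rwa [show 2 * ((θ - θ0)/2) = θ - θ0 by ring] at this
        have habs := abs_nonneg (Real.sin ((θ - θ0)/2))
        have hsa := sq_abs (Real.sin ((θ - θ0)/2))
        constructor
        · rintro ⟨h1, h2⟩
          refine ⟨h2, ?_⟩
          nlinarith
        · rintro ⟨h2, h1⟩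
          refine ⟨?_, h2⟩
          nlinarith
      have hb0 : 0 ≤ 2*Real.arcsin (s/2) := by
        have := Real.arcsin_nonneg.mpr (show 0 ≤ s/2 by linarith)
        linarith
      have hbπ : 2*Real.arcsin (s/2) < Real.pi := by
        have := Real.arcsin_lt_pi_div_two.mpr (show s/2 < 1 by linarith)
        linarith
      rw [hpre, arc_vol θ0 _ hb0 hbπ]
      congr 2
      ring
    · intro j _ hj
      rw [hzero i j θ0 s (by linarith) hj]
      simp
    · intro h; exact absurd (Finset.mem_univ i) h
  have hmassfull : ∀ (i : Fin (2*κ)) (θ0 s : ℝ), 2 ≤ s → s < 3 →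
      pT (closedBall (circ i θ0) s) = ENNReal.ofReal (wt κ T i) := by
    intro i θ0 s h2 h3
    rw [hpT_apply _ measurableSet_closedBall, Finset.sum_eq_single i]
    · have hpre : (circ i) ⁻¹' (closedBall (circ i θ0) s) ∩ Set.Ioc 0 (2*Real.pi)
          = Set.Ioc 0 (2*Real.pi) := by
        rw [Set.inter_eq_right]
        intro θ _
        simp only [Set.mem_preimage, mem_closedBall]
        rw [hdist]
        have := Real.abs_sin_le_one ((θ - θ0)/2)
        linarith
      rw [hpre, Real.volume_Ioc, sub_zero, ENNReal.inv_mul_cancel, mul_one]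
      · exact (ENNReal.ofReal_pos.mpr (by linarith)).ne'
      · exact ENNReal.ofReal_ne_top
    · intro j _ hj
      rw [hzero i j θ0 s h3 hj]
      simp
    · intro h; exact absurd (Finset.mem_univ i) h
  have hmassR : ∀ (i : Fin (2*κ)) (θ0 s : ℝ), 0 < s → s < 2 →
      (pT (closedBall (circ i θ0) s)).toReal
        = wt κ T i * (2 * Real.arcsin (s/2)) / Real.pi := by
    intro i θ0 s hs hs2
    have harc : 0 ≤ Real.arcsin (s/2) := Real.arcsin_nonneg.mpr (by linarith)
    rw [hmass i θ0 s hs hs2, ENNReal.toReal_mul, ENNReal.toReal_mul, ENNReal.toReal_inv,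
      ENNReal.toReal_ofReal (hw_pos i).le, ENNReal.toReal_ofReal (by positivity),
      ENNReal.toReal_ofReal (by linarith)]
    field_simp
    ring
  have hmassfullR : ∀ (i : Fin (2*κ)) (θ0 s : ℝ), 2 ≤ s → s < 3 →
      (pT (closedBall (circ i θ0) s)).toReal = wt κ T i := by
    intro i θ0 s h2 h3
    rw [hmassfull i θ0 s h2 h3, ENNReal.toReal_ofReal (hw_pos i).le]
  have hfin : ∀ A : Set (EuclideanSpace ℝ (Fin d)), pT A ≠ ∞ := by
    intro A
    have h2 : pT Set.univ = ∑ j : Fin (2*κ), ENNReal.ofReal (wt κ T j) := by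
      rw [hpT_apply _ MeasurableSet.univ]
      refine Finset.sum_congr rfl (fun j _ => ?_)
      rw [Set.preimage_univ, Set.univ_inter, Real.volume_Ioc, sub_zero,
        ENNReal.inv_mul_cancel, mul_one]
      · exact (ENNReal.ofReal_pos.mpr (by linarith)).ne'
      · exact ENNReal.ofReal_ne_top
    have h3 : pT Set.univ ≠ ∞ := by
      rw [h2]
      exact (ENNReal.sum_lt_top.mpr (fun j _ => ENNReal.ofReal_lt_top)).ne
    exact ne_top_of_le_ne_top h3 (measure_mono (Set.subset_univ A))
  have hsupp_mem : ∀ (i : Fin (2*κ)) (θ0 : ℝ), circ i θ0 ∈ msupport pT := by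
    intro i θ0 r hr
    have hs'0 : 0 < min (r/2) 1 := lt_min (by linarith) one_pos
    have hs'2 : min (r/2) 1 < 2 := lt_of_le_of_lt (min_le_right _ _) one_lt_two
    have hmr := hmassR i θ0 _ hs'0 hs'2
    have hpos : 0 < (pT (closedBall (circ i θ0) (min (r/2) 1))).toReal := by
      rw [hmr]
      have h1 := Real.arcsin_pos.mpr (show 0 < min (r/2) 1 / 2 by linarith)
      have h2 := hw_pos i
      positivity
    have hne : pT (closedBall (circ i θ0) (min (r/2) 1)) ≠ 0 := by
      intro h0; rw [h0] at hpos; simp at hpos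
    calc (0:ℝ≥0∞) < pT (closedBall (circ i θ0) (min (r/2) 1)) := pos_iff_ne_zero.mpr hne
      _ ≤ pT (ball (circ i θ0) r) := by
          refine measure_mono (closedBall_subset_ball ?_)
          have := min_le_left (r/2) 1
          linarith
  have hsupp_sub : ∀ x ∈ msupport pT, ∃ (i : Fin (2*κ)) (θ0 : ℝ), x = circ i θ0 := by
    intro x hx
    by_contra hcon
    push_neg at hcon
    have h2κ : 0 < 2*κ := by omega
    set K := ⋃ i : Fin (2*κ), (circ i) '' Set.Icc 0 (2*Real.pi) with hK
    have hKc : IsCompact K := isCompact_iUnion (fun i => (isCompact_Icc).image (hcont i))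
    have hxK : x ∉ K := by
      intro hmem
      simp only [hK, Set.mem_iUnion, Set.mem_image] at hmem
      obtain ⟨i, θ, _, hθ⟩ := hmem
      exact hcon i θ hθ.symm
    have hKne : K.Nonempty :=
      ⟨circ ⟨0, h2κ⟩ 0, Set.mem_iUnion.mpr ⟨⟨0, h2κ⟩,
        Set.mem_image_of_mem _ ⟨le_refl 0, by positivity⟩⟩⟩
    have hδ : 0 < infDist x K := (hKc.isClosed.notMem_iff_infDist_pos hKne).mp hxK
    have h0 : pT (ball x (infDist x K)) = 0 := by
      rw [hpT_apply _ measurableSet_ball]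
      apply Finset.sum_eq_zero
      intro j _
      have hem : (circ j) ⁻¹' (ball x (infDist x K)) ∩ Set.Ioc 0 (2*Real.pi) = ∅ := by
        ext θ
        simp only [Set.mem_inter_iff, Set.mem_preimage, mem_ball, Set.mem_Ioc,
          Set.mem_empty_iff_false, iff_false]
        rintro ⟨h1, h2a, h2b⟩
        have hmem : circ j θ ∈ K :=
          Set.mem_iUnion.mpr ⟨j, Set.mem_image_of_mem _ ⟨h2a.le, h2b⟩⟩
        have h3 := infDist_le_dist_of_mem (x := x) hmem
        rw [dist_comm] at h1
        linarith
      rw [hem]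
      simp
    have := hx (infDist x K) hδ
    rw [h0] at this
    exact lt_irrefl 0 this
  have core : ∀ e τ : ℝ, 0 < e → e ≤ 1/9 → 0 < τ → τ ≤ 1/2 → (1+e)^3 * τ^2 ≤ 4*e →
      ∀ c' : ℝ, c' ≤ 2 * Real.arcsin τ / (3*κ*Real.pi) →
      ∀ x ∈ msupport pT, ∀ s r : ℝ, 0 < s → s < r → (pT (closedBall x r)).toReal ≤ c' →
      (1+e)⁻¹ * (r/s) ≤ (pT (closedBall x r)).toReal / (pT (closedBall x s)).toReal ∧
      (pT (closedBall x r)).toReal / (pT (closedBall x s)).toReal ≤ (1+e) * (r/s) := by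
    intro e τ he he9 hτ hτ2 hτe c' hc' x hx s r hs hsr hmassle
    obtain ⟨i, θ0, rfl⟩ := hsupp_sub x hx
    have harcsinτ : Real.arcsin τ ≤ (1+e)*τ := arcsin_le' hτ.le he (by nlinarith) hτe
    have hc'' : c' < 1/(3*(κ:ℝ)) := by
      have haux : Real.arcsin τ ≤ 5/9 := le_trans harcsinτ (by nlinarith)
      calc c' ≤ 2*Real.arcsin τ/(3*κ*Real.pi) := hc'
        _ ≤ 2*(5/9)/(3*κ*Real.pi) := by
            exact (div_le_div_iff_of_pos_right (by positivity)).mpr (by linarith)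
        _ < 1/(3*κ) := by
            rw [div_lt_div_iff₀ (by positivity) (by positivity)]
            nlinarith
    have hr2 : r < 2 := by
      by_contra hcon
      push_neg at hcon
      have hm1 : 2 ≤ min r (5/2) := le_min hcon (by norm_num)
      have hm2 : min r (5/2) < 3 := lt_of_le_of_lt (min_le_right _ _) (by norm_num)
      have hful := hmassfullR i θ0 _ hm1 hm2
      have hmono : (pT (closedBall (circ i θ0) (min r (5/2)))).toReal
          ≤ (pT (closedBall (circ i θ0) r)).toReal :=
        ENNReal.toReal_mono (hfin _)
          (measure_mono (closedBall_subset_closedBall (min_le_left _ _)))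
      have hlb := hw_lb i
      rw [hful] at hmono
      linarith
    have hmr := hmassR i θ0 r (lt_trans hs hsr) hr2
    have hms := hmassR i θ0 s hs (by linarith)
    have hrτ : r/2 ≤ τ := by
      by_contra hcon
      push_neg at hcon
      have h1 : Real.arcsin τ < Real.arcsin (r/2) :=
        Real.strictMonoOn_arcsin ⟨by linarith, by linarith⟩ ⟨by linarith, by linarith⟩ hcon
      have h2 : (1/(3*(κ:ℝ))) * (2*Real.arcsin (r/2))/Real.pi ≤ c' := by
        refine le_trans ?_ hmassle
        rw [hmr]
        have h3 : 0 ≤ 2*Real.arcsin (r/2) := by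
          have := Real.arcsin_nonneg.mpr (show 0 ≤ r/2 by linarith)
          linarith
        exact (div_le_div_iff_of_pos_right hπ).mpr (mul_le_mul_of_nonneg_right (hw_lb i) h3)
      have h4 : Real.arcsin (r/2) ≤ Real.arcsin τ := by
        have h5 : (1/(3*(κ:ℝ))) * (2*Real.arcsin (r/2))/Real.pi
            = 2*Real.arcsin (r/2)/(3*κ*Real.pi) := by ring
        rw [h5] at h2
        have h6 := le_trans h2 hc'
        rw [div_le_div_iff₀ (by positivity) (by positivity)] at h6
        have hd : 0 < 3*(κ:ℝ)*Real.pi := by positivity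
        nlinarith
      linarith
    have hsτ : s/2 ≤ τ := by linarith
    have har_lb : r/2 ≤ Real.arcsin (r/2) := le_arcsin' (by linarith) (by linarith)
    have hee : (0:ℝ) ≤ 1+e := by linarith
    have heτ : e*τ ≤ (1/9)*(1/2) := mul_le_mul he9 hτ2 hτ.le (by norm_num)
    have hsr2 : s/2 ≤ r/2 := by linarith
    have hsqr : (r/2)*(r/2) ≤ τ*τ := mul_self_le_mul_self (by linarith) hrτ
    have hsqs : (s/2)*(s/2) ≤ τ*τ := mul_self_le_mul_self (by linarith) (by linarith)
    have hcube : (0:ℝ) ≤ (1+e)^3 := by positivity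
    have har_ub : Real.arcsin (r/2) ≤ (1+e)*(r/2) :=
      arcsin_le' (by linarith) he
        (by nlinarith [mul_le_mul_of_nonneg_left hrτ hee])
        (by nlinarith [mul_le_mul_of_nonneg_left hsqr hcube])
    have has_lb : s/2 ≤ Real.arcsin (s/2) := le_arcsin' (by linarith) (by linarith)
    have has_ub : Real.arcsin (s/2) ≤ (1+e)*(s/2) :=
      arcsin_le' (by linarith) he
        (by nlinarith [mul_le_mul_of_nonneg_left (show s/2 ≤ τ by linarith) hee])
        (by nlinarith [mul_le_mul_of_nonneg_left hsqs hcube])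
    have has_pos : 0 < Real.arcsin (s/2) := Real.arcsin_pos.mpr (by linarith)
    have har_pos : 0 < Real.arcsin (r/2) := Real.arcsin_pos.mpr (by linarith)
    have hwp := hw_pos i
    have hratio : (pT (closedBall (circ i θ0) r)).toReal / (pT (closedBall (circ i θ0) s)).toReal
        = Real.arcsin (r/2) / Real.arcsin (s/2) := by
      rw [hmr, hms, div_eq_div_iff (by positivity) (by positivity)]
      ring
    rw [hratio]
    constructor
    · have step1 : (1+e)⁻¹ * (r/s) = (r/2)/((1+e)*(s/2)) := by
        field_simp
        try ring
      rw [step1]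
      exact div_le_div₀ har_pos.le har_lb has_pos has_ub
    · have step1 : (1+e) * (r/s) = ((1+e)*(r/2))/(s/2) := by
        field_simp
        try ring
      rw [step1]
      exact div_le_div₀ (mul_nonneg (by linarith) (by linarith)) har_ub (by linarith) has_lb
  refine ⟨?_, ?_, ?_⟩
  · -- general ε
    intro ε hε
    set e := min (ε/3) (1/9) with hee
    have he0 : 0 < e := lt_min (by linarith) (by norm_num)
    have he9 : e ≤ 1/9 := min_le_right _ _
    have heε : e ≤ ε/3 := min_le_left _ _
    have harc_pos : 0 < Real.arcsin e := Real.arcsin_pos.mpr he0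
    have harc_ub : Real.arcsin e ≤ Real.pi/2 := Real.arcsin_le_pi_div_two e
    refine ⟨2*Real.arcsin e/(3*κ*Real.pi), by positivity, ?_, ?_⟩
    · calc 2*Real.arcsin e/(3*κ*Real.pi) ≤ 2*(Real.pi/2)/(3*κ*Real.pi) :=
            (div_le_div_iff_of_pos_right (by positivity)).mpr (by linarith)
        _ = 1/(3*κ) := by field_simp
        _ ≤ 1 := by rw [div_le_one (by positivity)]; linarith
    · intro x hx s r hs hsr hm
      have hcube : (1+e)^3 ≤ (10/9)^3 :=
        pow_le_pow_left₀ (by linarith) (by linarith) 3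
      have hcnd : (1+e)^3 * e^2 ≤ 4*e := by nlinarith
      have hkey := core e e he0 he9 he0 (by linarith) hcnd _ le_rfl x hx s r hs hsr hm
      have hrs : (0:ℝ) ≤ r/s := div_nonneg (by linarith) hs.le
      rw [pow_one]
      constructor
      · refine le_trans ?_ hkey.1
        apply mul_le_mul_of_nonneg_right ?_ hrs
        apply inv_anti₀ (by linarith) (by linarith)
      · refine le_trans hkey.2 ?_
        apply mul_le_mul_of_nonneg_right (by linarith) hrs
  · -- ε = 1/3, c = 1/(9κ)
    have harc : Real.arcsin (1/2) = Real.pi/6 := by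
      rw [show (1:ℝ)/2 = Real.sin (Real.pi/6) by rw [Real.sin_pi_div_six]]
      exact Real.arcsin_sin (by linarith) (by linarith)
    refine ⟨by positivity, ?_, ?_⟩
    · rw [div_le_one (by positivity)]; linarith
    · intro x hx s r hs hsr hm
      have hcond : (1:ℝ)/(9*κ) ≤ 2*Real.arcsin (1/2)/(3*κ*Real.pi) := by
        rw [harc]
        rw [div_le_div_iff₀ (by positivity) (by positivity)]
        ring_nf
        try linarith
      have hkey := core (1/9) (1/2) (by norm_num) le_rfl (by norm_num) le_rfl (by norm_num)
        _ hcond x hx s r hs hsr hm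
      have h13 : (1:ℝ) + 1/3/3 = 1 + 1/9 := by norm_num
      rw [pow_one, h13]
      exact hkey
  · -- upper bound on valid constants
    intro ce hce
    by_contra hcon
    push_neg at hcon
    obtain ⟨hc0, hc1, h⟩ := hce
    have h2κ : 0 < 2*κ := by omega
    have hx := hsupp_mem ⟨0, h2κ⟩ 0
    have hm2 := hmassfullR ⟨0, h2κ⟩ 0 2 le_rfl (by norm_num)
    have hm52 := hmassfullR ⟨0, h2κ⟩ 0 (5/2) (by norm_num) (by norm_num)
    have hub := hw_ub ⟨0, h2κ⟩
    have hkey := h (circ ⟨0, h2κ⟩ 0) hx 2 (5/2) (by norm_num) (by norm_num)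
      (by rw [hm52]; linarith)
    rw [pow_one, hm52, hm2, div_self (ne_of_gt (hw_pos ⟨0, h2κ⟩))] at hkey
    have h1 := hkey.1
    norm_num at h1
end

section
/- Let T ⊂ {1,…,2κ} with |T| = κ, and let S be a sample of κ i.i.d. points from p_T (the distribution on 2κ circles assigning mass 1/(3κ) to each circle indexed in T and 2/(3κ) to each other circle, uniform on each circle). Then with probability at least 1 − 4·exp(−κ/2048), the sets L = {i ∈ T : |C_i ∩ S| = 1} and L' = {i ∉ T : |C_i ∩ S| = 1} both have size at least κ/8. -/
open Finset

namespace SampleCover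

variable {α : Type*} [Fintype α] [DecidableEq α] [Nonempty α]

def wp (w : α → ℝ) {m : ℕ} (σ : Fin m → α) : ℝ := ∏ j, w (σ j)

def Ex (w : α → ℝ) (m : ℕ) (g : (Fin m → α) → ℝ) : ℝ := ∑ σ : Fin m → α, wp w σ * g σ

lemma wp_nonneg {w : α → ℝ} (hw0 : ∀ a, 0 ≤ w a) {m : ℕ} (σ : Fin m → α) : 0 ≤ wp w σ :=
  Finset.prod_nonneg fun j _ => hw0 _

lemma wp_cons (w : α → ℝ) {m : ℕ} (a : α) (σ : Fin m → α) :
    wp w (Fin.cons a σ) = w a * wp w σ := by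
  simp [wp, Fin.prod_univ_succ]

lemma Ex_succ (w : α → ℝ) (m : ℕ) (g : (Fin (m+1) → α) → ℝ) :
    Ex w (m+1) g = ∑ a, w a * Ex w m (fun σ => g (Fin.cons a σ)) := by
  rw [Ex, ← (Fin.consEquiv (fun _ : Fin (m+1) => α)).sum_comp (fun σ => wp w σ * g σ)]
  rw [Fintype.sum_prod_type]
  simp only [Fin.consEquiv, Equiv.coe_fn_mk, wp_cons, Ex, mul_assoc, Finset.mul_sum]

lemma step_bound (w : α → ℝ) (hw0 : ∀ a, 0 ≤ w a) (hw1 : ∑ a, w a = 1)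
    (X : α → ℝ) (c : ℝ) (hmean : ∑ a, w a * X a = 0)
    (hbd : ∀ a, |X a| ≤ c) (t : ℝ) :
    ∑ a, w a * Real.exp (t * X a) ≤ Real.exp (t^2 * c^2 / 2) := by
  have hc : 0 ≤ c := le_trans (abs_nonneg _) (hbd (Classical.arbitrary _))
  rcases eq_or_lt_of_le hc with hc0 | hc0
  · have hX : ∀ a, X a = 0 := fun a =>
      abs_eq_zero.mp (le_antisymm (hc0 ▸ hbd a) (abs_nonneg _))
    simp only [hX, mul_zero, Real.exp_zero, mul_one, hw1]
    exact Real.one_le_exp (by positivity)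
  · have hcne : c ≠ 0 := ne_of_gt hc0
    have key : ∀ a, Real.exp (t * X a) ≤
        Real.cosh (t*c) + (X a / c) * Real.sinh (t*c) := by
      intro a
      have hxa := abs_le.mp (hbd a)
      set x := X a with hx
      have hl0 : 0 ≤ (x + c) / (2*c) := by
        apply div_nonneg (by linarith [hxa.1]) (by linarith)
      have hl1 : 0 ≤ 1 - (x + c) / (2*c) := by
        rw [sub_nonneg, div_le_one (by linarith)]
        linarith [hxa.2]
      have hcomb : (x + c) / (2*c) + (1 - (x + c) / (2*c)) = 1 := by ring
      have hpt : ((x + c) / (2*c)) • (t*c) + (1 - (x + c) / (2*c)) • (-(t*c)) = t * x := by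
        simp only [smul_eq_mul]
        field_simp
        ring
      have := convexOn_exp.2 (Set.mem_univ (t*c)) (Set.mem_univ (-(t*c))) hl0 hl1 hcomb
      rw [hpt] at this
      refine this.trans_eq ?_
      rw [Real.cosh_eq, Real.sinh_eq]
      simp only [smul_eq_mul]
      field_simp
      ring
    calc ∑ a, w a * Real.exp (t * X a)
        ≤ ∑ a, w a * (Real.cosh (t*c) + (X a / c) * Real.sinh (t*c)) :=
          Finset.sum_le_sum fun a _ => mul_le_mul_of_nonneg_left (key a) (hw0 a)
      _ = Real.cosh (t*c) * (∑ a, w a) + (Real.sinh (t*c) / c) * (∑ a, w a * X a) := by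
          rw [Finset.mul_sum, Finset.mul_sum, ← Finset.sum_add_distrib]
          congr 1; ext a; ring
      _ = Real.cosh (t*c) := by rw [hw1, hmean]; ring
      _ ≤ Real.exp ((t*c)^2/2) := Real.cosh_le_exp_half_sq _
      _ = Real.exp (t^2 * c^2 / 2) := by ring_nf

end SampleCover

namespace SampleCover

variable {α : Type*} [Fintype α] [DecidableEq α] [Nonempty α]

lemma mgf_bound (w : α → ℝ) (hw0 : ∀ a, 0 ≤ w a) (hw1 : ∑ a, w a = 1) (c : ℝ) :
    ∀ (m : ℕ) (f : (Fin m → α) → ℝ),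
      (∀ σ (j : Fin m) b, |f σ - f (Function.update σ j b)| ≤ c) → ∀ t : ℝ,
      Ex w m (fun σ => Real.exp (t * (f σ - Ex w m f))) ≤ Real.exp (m * (t^2 * c^2 / 2)) := by
  intro m
  induction m with
  | zero =>
    intro f _ t
    have hEx : ∀ g : (Fin 0 → α) → ℝ, Ex w 0 g = g default := by
      intro g
      rw [Ex, Fintype.sum_unique]
      simp [wp]
    rw [hEx, hEx]
    have : (default : Fin 0 → α) = default := rfl
    simp
  | succ m ih =>
    intro f hf t
    set F := Ex w (m+1) f with hF
    set h : (Fin m → α) → ℝ := fun σ => ∑ a, w a * f (Fin.cons a σ) with hh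
    have hEh : Ex w m h = F := by
      rw [hF, Ex_succ w m f, Ex]
      simp only [hh, Finset.mul_sum]
      rw [Finset.sum_comm]
      refine Finset.sum_congr rfl fun a _ => ?_
      rw [Ex, Finset.mul_sum]
      exact Finset.sum_congr rfl fun σ _ => by ring
    have hbdh : ∀ σ (j : Fin m) b, |h σ - h (Function.update σ j b)| ≤ c := by
      intro σ j b
      have hdiff : h σ - h (Function.update σ j b)
          = ∑ a, w a * (f (Fin.cons a σ) - f (Fin.cons a (Function.update σ j b))) := by
        simp only [hh]
        rw [← Finset.sum_sub_distrib]
        exact Finset.sum_congr rfl fun a _ => by ring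
      rw [hdiff]
      calc |∑ a, w a * (f (Fin.cons a σ) - f (Fin.cons a (Function.update σ j b)))|
          ≤ ∑ a, |w a * (f (Fin.cons a σ) - f (Fin.cons a (Function.update σ j b)))| :=
            Finset.abs_sum_le_sum_abs _ _
        _ ≤ ∑ a, w a * c := by
            refine Finset.sum_le_sum fun a _ => ?_
            rw [abs_mul, abs_of_nonneg (hw0 a)]
            refine mul_le_mul_of_nonneg_left ?_ (hw0 a)
            rw [Fin.cons_update]
            exact hf _ _ _
        _ = c := by rw [← Finset.sum_mul, hw1, one_mul]
    calc Ex w (m+1) (fun σ => Real.exp (t * (f σ - F)))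
        = ∑ σ : Fin m → α, wp w σ *
            (∑ a, w a * Real.exp (t * (f (Fin.cons a σ) - F))) := by
          rw [Ex_succ]
          simp only [Ex, Finset.mul_sum]
          rw [Finset.sum_comm]
          refine Finset.sum_congr rfl fun a _ => Finset.sum_congr rfl fun σ _ => by ring
      _ ≤ ∑ σ : Fin m → α, wp w σ *
            (Real.exp (t * (h σ - F)) * Real.exp (t^2 * c^2 / 2)) := by
          refine Finset.sum_le_sum fun σ _ => mul_le_mul_of_nonneg_left ?_ (wp_nonneg hw0 σ)
          have hfac : ∀ a, Real.exp (t * (f (Fin.cons a σ) - F))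
              = Real.exp (t * (h σ - F)) * Real.exp (t * (f (Fin.cons a σ) - h σ)) := by
            intro a
            rw [← Real.exp_add]
            ring_nf
          simp only [hfac]
          have hpull : ∑ a, w a * (Real.exp (t * (h σ - F)) *
                Real.exp (t * (f (Fin.cons a σ) - h σ)))
              = Real.exp (t * (h σ - F)) *
                ∑ a, w a * Real.exp (t * (f (Fin.cons a σ) - h σ)) := by
            rw [Finset.mul_sum]
            exact Finset.sum_congr rfl fun a _ => by ring
          rw [hpull]
          refine mul_le_mul_of_nonneg_left ?_ (Real.exp_nonneg _)
          refine step_bound w hw0 hw1 (fun a => f (Fin.cons a σ) - h σ) c ?_ ?_ t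
          · show ∑ a, w a * (f (Fin.cons a σ) - h σ) = 0
            have : ∑ a, w a * (f (Fin.cons a σ) - h σ)
                = (∑ a, w a * f (Fin.cons a σ)) - (∑ a, w a) * h σ := by
              rw [Finset.sum_mul, ← Finset.sum_sub_distrib]
              exact Finset.sum_congr rfl fun a _ => by ring
            rw [this, hw1]
            simp [hh]
          · intro a
            show |f (Fin.cons a σ) - h σ| ≤ c
            have hab : ∀ b, |f (Fin.cons a σ) - f (Fin.cons b σ)| ≤ c := fun b => by
              have hcb := hf (Fin.cons a σ) 0 b
              rwa [Fin.update_cons_zero] at hcb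
            have hrepr : f (Fin.cons a σ) - h σ
                = ∑ b, w b * (f (Fin.cons a σ) - f (Fin.cons b σ)) := by
              have : ∑ b, w b * (f (Fin.cons a σ) - f (Fin.cons b σ))
                  = (∑ b, w b) * f (Fin.cons a σ) - ∑ b, w b * f (Fin.cons b σ) := by
                rw [Finset.sum_mul, ← Finset.sum_sub_distrib]
                exact Finset.sum_congr rfl fun b _ => by ring
              rw [this, hw1, one_mul, hh]
            rw [hrepr]
            calc |∑ b, w b * (f (Fin.cons a σ) - f (Fin.cons b σ))|
                ≤ ∑ b, |w b * (f (Fin.cons a σ) - f (Fin.cons b σ))| :=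
                  Finset.abs_sum_le_sum_abs _ _
              _ ≤ ∑ b, w b * c := by
                  refine Finset.sum_le_sum fun b _ => ?_
                  rw [abs_mul, abs_of_nonneg (hw0 b)]
                  exact mul_le_mul_of_nonneg_left (hab b) (hw0 b)
              _ = c := by rw [← Finset.sum_mul, hw1, one_mul]
      _ = Real.exp (t^2 * c^2 / 2) * Ex w m (fun σ => Real.exp (t * (h σ - Ex w m h))) := by
          rw [hEh]
          simp only [Ex, Finset.mul_sum]
          exact Finset.sum_congr rfl fun σ _ => by ring
      _ ≤ Real.exp (t^2 * c^2 / 2) * Real.exp ((m : ℝ) * (t^2 * c^2 / 2)) := by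
          refine mul_le_mul_of_nonneg_left (ih h hbdh t) (Real.exp_nonneg _)
      _ = Real.exp (((m+1 : ℕ) : ℝ) * (t^2 * c^2 / 2)) := by
          rw [← Real.exp_add]
          push_cast
          ring_nf

end SampleCover

namespace SampleCover

variable {α : Type*} [Fintype α] [DecidableEq α] [Nonempty α]

lemma tail_bound (w : α → ℝ) (hw0 : ∀ a, 0 ≤ w a) (hw1 : ∑ a, w a = 1) (c : ℝ)
    (m : ℕ) (f : (Fin m → α) → ℝ)
    (hf : ∀ σ (j : Fin m) b, |f σ - f (Function.update σ j b)| ≤ c)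
    (a t : ℝ) (ht : 0 ≤ t) :
    ∑ σ ∈ Finset.univ.filter (fun σ => f σ ≤ a), wp w σ
      ≤ Real.exp (t*a - t * Ex w m f + m * (t^2*c^2/2)) := by
  set E := Ex w m f with hE
  have key : ∀ σ : Fin m → α, σ ∈ Finset.univ.filter (fun σ => f σ ≤ a) →
      wp w σ ≤ wp w σ * Real.exp (t * (a - f σ)) := by
    intro σ hσ
    rw [Finset.mem_filter] at hσ
    nth_rewrite 1 [← mul_one (wp w σ)]
    refine mul_le_mul_of_nonneg_left (Real.one_le_exp ?_) (wp_nonneg hw0 σ)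
    have := hσ.2
    nlinarith
  calc ∑ σ ∈ Finset.univ.filter (fun σ => f σ ≤ a), wp w σ
      ≤ ∑ σ ∈ Finset.univ.filter (fun σ => f σ ≤ a), wp w σ * Real.exp (t * (a - f σ)) :=
        Finset.sum_le_sum key
    _ ≤ ∑ σ : Fin m → α, wp w σ * Real.exp (t * (a - f σ)) := by
        refine Finset.sum_le_sum_of_subset_of_nonneg (Finset.filter_subset _ _) ?_
        intro σ _ _
        exact mul_nonneg (wp_nonneg hw0 σ) (Real.exp_nonneg _)
    _ = Real.exp (t*a - t * E) *
          Ex w m (fun σ => Real.exp ((-t) * (f σ - E))) := by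
        rw [Ex, Finset.mul_sum]
        refine Finset.sum_congr rfl fun σ _ => ?_
        have hterm : Real.exp (t*(a - f σ))
            = Real.exp (t*a - t*E) * Real.exp ((-t)*(f σ - E)) := by
          rw [← Real.exp_add]
          congr 1
          ring
        rw [hterm]
        ring
    _ ≤ Real.exp (t*a - t * E) * Real.exp (m * ((-t)^2*c^2/2)) := by
        refine mul_le_mul_of_nonneg_left ?_ (Real.exp_nonneg _)
        rw [hE]
        exact mgf_bound w hw0 hw1 c m f hf (-t)
    _ = Real.exp (t*a - t * E + m * (t^2*c^2/2)) := by
        rw [← Real.exp_add]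
        ring_nf

lemma sum_wp_univ (w : α → ℝ) (hw1 : ∑ a, w a = 1) (m : ℕ) :
    ∑ σ : Fin m → α, wp w σ = 1 := by
  simp only [wp]
  rw [← Fintype.piFinset_univ,
    ← Finset.prod_univ_sum (fun _ : Fin m => (Finset.univ : Finset α)) (fun _ a => w a)]
  simp [hw1]

end SampleCover

namespace SampleCover

variable {α : Type*} [Fintype α] [DecidableEq α] [Nonempty α]

/-- number of indices in `A` hit exactly once -/
def fA (A : Finset α) {m : ℕ} (σ : Fin m → α) : ℝ :=
  ((A.filter (fun i => (Finset.univ.filter (fun j => σ j = i)).card = 1)).card : ℝ)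

lemma fA_bdd (A : Finset α) {m : ℕ} :
    ∀ (σ : Fin m → α) (j : Fin m) (b : α), |fA A σ - fA A (Function.update σ j b)| ≤ 2 := by
  intro σ j b
  set σ' := Function.update σ j b with hσ'
  set s := A.filter (fun i => (Finset.univ.filter (fun j' => σ j' = i)).card = 1) with hs
  set s' := A.filter (fun i => (Finset.univ.filter (fun j' => σ' j' = i)).card = 1) with hs'
  have hagree : ∀ i, i ≠ σ j → i ≠ b →
      ((Finset.univ.filter (fun j' => σ j' = i)) = (Finset.univ.filter (fun j' => σ' j' = i))) := by
    intro i hi1 hi2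
    ext j'
    simp only [Finset.mem_filter, Finset.mem_univ, true_and]
    by_cases hj : j' = j
    · subst hj
      rw [hσ', Function.update_self]
      constructor
      · intro hc; exact absurd hc.symm hi1
      · intro hc; exact absurd hc.symm hi2
    · rw [hσ', Function.update_of_ne hj]
  have hsub1 : s ⊆ s' ∪ {σ j, b} := by
    intro i hi
    by_cases h1 : i = σ j
    · exact Finset.mem_union_right _ (by simp [h1])
    by_cases h2 : i = b
    · exact Finset.mem_union_right _ (by simp [h2])
    refine Finset.mem_union_left _ ?_
    rw [hs'] at *
    rw [hs] at hi
    rw [Finset.mem_filter] at hi ⊢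
    exact ⟨hi.1, by rw [← hagree i h1 h2]; exact hi.2⟩
  have hsub2 : s' ⊆ s ∪ {σ j, b} := by
    intro i hi
    by_cases h1 : i = σ j
    · exact Finset.mem_union_right _ (by simp [h1])
    by_cases h2 : i = b
    · exact Finset.mem_union_right _ (by simp [h2])
    refine Finset.mem_union_left _ ?_
    rw [hs] at *
    rw [hs'] at hi
    rw [Finset.mem_filter] at hi ⊢
    exact ⟨hi.1, by rw [hagree i h1 h2]; exact hi.2⟩
  have hcard : ∀ u v : Finset α, u ⊆ v ∪ {σ j, b} → u.card ≤ v.card + 2 := by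
    intro u v huv
    calc u.card ≤ (v ∪ {σ j, b}).card := Finset.card_le_card huv
      _ ≤ v.card + ({σ j, b} : Finset α).card := Finset.card_union_le _ _
      _ ≤ v.card + 2 := by
          have : ({σ j, b} : Finset α).card ≤ 2 := Finset.card_insert_le _ _ |>.trans (by simp)
          omega
  have h1 := hcard s s' hsub1
  have h2 := hcard s' s hsub2
  rw [fA, fA, ← hs, ← hs', abs_sub_le_iff]
  constructor
  · have := h1
    push_cast
    rw [sub_le_iff_le_add]
    calc (s.card : ℝ) ≤ (s'.card : ℝ) + 2 := by exact_mod_cast h1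
      _ = 2 + (s'.card : ℝ) := by ring
  · push_cast
    rw [sub_le_iff_le_add]
    calc (s'.card : ℝ) ≤ (s.card : ℝ) + 2 := by exact_mod_cast h2
      _ = 2 + (s.card : ℝ) := by ring

end SampleCover

namespace SampleCover

variable {α : Type*} [Fintype α] [DecidableEq α] [Nonempty α]

lemma Ex_fA (A : Finset α) (w : α → ℝ) (m : ℕ) :
    Ex w m (fA A) = ∑ i ∈ A,
      ∑ σ ∈ Finset.univ.filter
        (fun σ : Fin m → α => (Finset.univ.filter (fun j => σ j = i)).card = 1), wp w σ := by
  simp only [Ex, fA, Finset.card_filter]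
  push_cast
  simp only [Finset.mul_sum]
  rw [Finset.sum_comm]
  refine Finset.sum_congr rfl fun i _ => ?_
  rw [Finset.sum_filter]
  refine Finset.sum_congr rfl fun σ _ => ?_
  by_cases h : (Finset.univ.filter (fun j => σ j = i)).card = 1 <;> simp [h]

lemma single_prob_ge (w : α → ℝ) (hw0 : ∀ a, 0 ≤ w a) (i : α) (m : ℕ) :
    (m : ℝ) * w i * (∑ a ∈ Finset.univ.erase i, w a)^(m-1)
      ≤ ∑ σ ∈ Finset.univ.filter
          (fun σ : Fin m → α => (Finset.univ.filter (fun j => σ j = i)).card = 1), wp w σ := by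
  set S := ∑ a ∈ Finset.univ.erase i, w a with hS
  set t : Fin m → Fin m → Finset α :=
    fun j j' => if j' = j then {i} else Finset.univ.erase i with ht
  have hBsub : ∀ j : Fin m, Fintype.piFinset (t j) ⊆
      Finset.univ.filter (fun σ => (Finset.univ.filter (fun j' => σ j' = i)).card = 1) := by
    intro j σ hσ
    rw [Fintype.mem_piFinset] at hσ
    rw [Finset.mem_filter]
    refine ⟨Finset.mem_univ _, ?_⟩
    have : Finset.univ.filter (fun j' => σ j' = i) = {j} := by
      ext j'
      simp only [Finset.mem_filter, Finset.mem_univ, true_and, Finset.mem_singleton]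
      constructor
      · intro hji
        by_contra hne
        have := hσ j'
        rw [ht] at this
        simp only [if_neg hne] at this
        exact (Finset.ne_of_mem_erase this) hji
      · intro hjj
        subst hjj
        have := hσ j'
        rw [ht] at this
        simpa using this
    rw [this, Finset.card_singleton]
  have hdisj : ∀ j j' : Fin m, j ≠ j' →
      Disjoint (Fintype.piFinset (t j)) (Fintype.piFinset (t j')) := by
    intro j j' hne
    rw [Finset.disjoint_left]
    intro σ h1 h2
    rw [Fintype.mem_piFinset] at h1 h2
    have e1 := h1 j
    have e2 := h2 j
    simp only [ht] at e1 e2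
    simp only [if_true, Finset.mem_singleton] at e1
    rw [if_neg hne] at e2
    exact (Finset.ne_of_mem_erase e2) e1
  have hBsum : ∀ j : Fin m, ∑ σ ∈ Fintype.piFinset (t j), wp w σ = w i * S^(m-1) := by
    intro j
    have h1 : ∑ σ ∈ Fintype.piFinset (t j), wp w σ = ∏ j', ∑ a ∈ t j j', w a := by
      simp only [wp]
      rw [Finset.prod_univ_sum]
    rw [h1]
    have h2 : ∀ j', ∑ a ∈ t j j', w a = if j' = j then w i else S := by
      intro j'
      rw [ht]
      by_cases hj : j' = j <;> simp [hj, hS]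
    simp only [h2]
    rw [← Finset.mul_prod_erase Finset.univ _ (Finset.mem_univ j)]
    rw [if_pos rfl]
    congr 1
    rw [Finset.prod_congr rfl (fun j' hj' => if_neg (Finset.ne_of_mem_erase hj')),
      Finset.prod_const, Finset.card_erase_of_mem (Finset.mem_univ j), Finset.card_univ,
      Fintype.card_fin]
  calc (m : ℝ) * w i * S^(m-1)
      = ∑ j : Fin m, w i * S^(m-1) := by
        rw [Finset.sum_const, Finset.card_univ, Fintype.card_fin, nsmul_eq_mul]
        ring
    _ = ∑ j : Fin m, ∑ σ ∈ Fintype.piFinset (t j), wp w σ := by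
        exact Finset.sum_congr rfl fun j _ => (hBsum j).symm
    _ = ∑ σ ∈ Finset.univ.biUnion (fun j => Fintype.piFinset (t j)), wp w σ := by
        rw [Finset.sum_biUnion]
        intro j _ j' _ hne
        exact hdisj j j' hne
    _ ≤ ∑ σ ∈ Finset.univ.filter
          (fun σ : Fin m → α => (Finset.univ.filter (fun j => σ j = i)).card = 1), wp w σ := by
        refine Finset.sum_le_sum_of_subset_of_nonneg ?_ (fun σ _ _ => wp_nonneg hw0 σ)
        intro σ hσ
        rw [Finset.mem_biUnion] at hσ
        obtain ⟨j, _, hj⟩ := hσ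
        exact hBsub j hj

end SampleCover

namespace SampleCover

lemma combinatorial_main (κ : ℕ) (hκ : 0 < κ) (T : Finset (Fin (2*κ))) (hT : T.card = κ) :
    1 - 2 * Real.exp (-(κ:ℝ)/2048) ≤
      ∑ σ ∈ Finset.univ.filter (fun σ : Fin κ → Fin (2*κ) =>
        (κ:ℝ)/8 ≤ fA T σ ∧ (κ:ℝ)/8 ≤ fA Tᶜ σ),
        wp (fun i => if i ∈ T then 1/(3*(κ:ℝ)) else 2/(3*(κ:ℝ))) σ := by
  haveI : Nonempty (Fin (2*κ)) := Fin.pos_iff_nonempty.mp (by omega)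
  set w : Fin (2*κ) → ℝ := fun i => if i ∈ T then 1/(3*(κ:ℝ)) else 2/(3*(κ:ℝ)) with hw
  have hκR : (0:ℝ) < κ := by exact_mod_cast hκ
  have hw0 : ∀ i, 0 ≤ w i := by
    intro i
    rw [hw]
    by_cases h : i ∈ T <;> simp [h] <;> positivity
  have hTc : Tᶜ.card = κ := by
    rw [Finset.card_compl, Fintype.card_fin, hT]
    omega
  have hw1 : ∑ i, w i = 1 := by
    rw [← Finset.sum_filter_add_sum_filter_not Finset.univ (· ∈ T) w]
    have h1 : Finset.univ.filter (· ∈ T) = T := by ext i; simp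
    have h2 : Finset.univ.filter (fun i => ¬ i ∈ T) = Tᶜ := by ext i; simp
    rw [h1, h2]
    have hA : ∑ i ∈ T, w i = κ * (1/(3*(κ:ℝ))) := by
      rw [Finset.sum_congr rfl (fun i hi => show w i = 1/(3*(κ:ℝ)) by
        rw [hw]; simp [hi]), Finset.sum_const, hT, nsmul_eq_mul]
    have hB : ∑ i ∈ Tᶜ, w i = κ * (2/(3*(κ:ℝ))) := by
      rw [Finset.sum_congr rfl (fun i hi => show w i = 2/(3*(κ:ℝ)) by
        rw [hw]; simp [Finset.mem_compl.mp hi]), Finset.sum_const, hTc, nsmul_eq_mul]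
    rw [hA, hB]
    field_simp
    ring
  -- mean bounds
  have hbern : ∀ p : ℝ, 0 ≤ p → (κ:ℝ) * p ≤ 1 → 1 - (κ:ℝ)*p ≤ (1 - p)^(κ-1) := by
    intro p hp0 hp1
    have hκ1 : (1:ℝ) ≤ κ := by exact_mod_cast hκ
    have h := one_add_mul_le_pow (a := -p)
      (by nlinarith [mul_nonneg (sub_nonneg.mpr hκ1) hp0]) (κ-1)
    have hcast : ((κ-1 : ℕ) : ℝ) = (κ:ℝ) - 1 := by
      rw [Nat.cast_sub hκ, Nat.cast_one]
    rw [hcast] at h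
    have : 1 - (κ:ℝ)*p ≤ 1 + ((κ:ℝ)-1) * (-p) := by nlinarith
    calc 1 - (κ:ℝ)*p ≤ 1 + ((κ:ℝ)-1) * (-p) := this
      _ ≤ (1 + -p)^(κ-1) := h
      _ = (1 - p)^(κ-1) := by ring_nf
  have hSer : ∀ i : Fin (2*κ), ∑ a ∈ Finset.univ.erase i, w a = 1 - w i := by
    intro i
    rw [Finset.sum_erase_eq_sub (Finset.mem_univ i), hw1]
  have hmean : ∀ A : Finset (Fin (2*κ)), A.card = κ →
      (∀ i ∈ A, 2/9 ≤ (κ:ℝ) * w i * (1 - w i)^(κ-1)) →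
      2*(κ:ℝ)/9 ≤ Ex w κ (fA A) := by
    intro A hA hAi
    rw [Ex_fA]
    calc 2*(κ:ℝ)/9 = ∑ _i ∈ A, (2/9 : ℝ) := by
          rw [Finset.sum_const, hA, nsmul_eq_mul]; ring
      _ ≤ ∑ i ∈ A, ∑ σ ∈ Finset.univ.filter
            (fun σ : Fin κ → Fin (2*κ) => (Finset.univ.filter (fun j => σ j = i)).card = 1),
            wp w σ := by
          refine Finset.sum_le_sum fun i hi => ?_
          refine le_trans (hAi i hi) ?_
          have := single_prob_ge w hw0 i κ
          rwa [hSer i] at this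
  have hmeanT : 2*(κ:ℝ)/9 ≤ Ex w κ (fA T) := by
    refine hmean T hT fun i hi => ?_
    have hwi : w i = 1/(3*(κ:ℝ)) := by rw [hw]; exact if_pos hi
    rw [hwi]
    have hb := hbern (1/(3*(κ:ℝ))) (by positivity)
      (by rw [mul_one_div, div_le_one (by positivity)]; linarith)
    have h23 : (2:ℝ)/3 ≤ (1 - 1/(3*(κ:ℝ)))^(κ-1) := by
      refine le_trans ?_ hb
      have : (κ:ℝ) * (1/(3*(κ:ℝ))) = 1/3 := by field_simp
      rw [this]
      norm_num
    have hk3 : (κ:ℝ) * (1/(3*(κ:ℝ))) = 1/3 := by field_simp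
    calc (2:ℝ)/9 = (1/3) * (2/3) := by norm_num
      _ ≤ (1/3) * (1 - 1/(3*(κ:ℝ)))^(κ-1) := by nlinarith
      _ = (κ:ℝ) * (1/(3*(κ:ℝ))) * (1 - 1/(3*(κ:ℝ)))^(κ-1) := by rw [hk3]
  have hmeanTc : 2*(κ:ℝ)/9 ≤ Ex w κ (fA Tᶜ) := by
    refine hmean Tᶜ hTc fun i hi => ?_
    have hwi : w i = 2/(3*(κ:ℝ)) := by rw [hw]; exact if_neg (Finset.mem_compl.mp hi)
    rw [hwi]
    have hb := hbern (2/(3*(κ:ℝ))) (by positivity)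
      (by rw [mul_div_assoc', div_le_one (by positivity)]; nlinarith)
    have h13 : (1:ℝ)/3 ≤ (1 - 2/(3*(κ:ℝ)))^(κ-1) := by
      refine le_trans ?_ hb
      have : (κ:ℝ) * (2/(3*(κ:ℝ))) = 2/3 := by field_simp
      rw [this]
      norm_num
    have hk3 : (κ:ℝ) * (2/(3*(κ:ℝ))) = 2/3 := by field_simp
    calc (2:ℝ)/9 = (2/3) * (1/3) := by norm_num
      _ ≤ (2/3) * (1 - 2/(3*(κ:ℝ)))^(κ-1) := by nlinarith
      _ = (κ:ℝ) * (2/(3*(κ:ℝ))) * (1 - 2/(3*(κ:ℝ)))^(κ-1) := by rw [hk3]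
  -- tail bounds
  have htail : ∀ A : Finset (Fin (2*κ)), 2*(κ:ℝ)/9 ≤ Ex w κ (fA A) →
      ∑ σ ∈ Finset.univ.filter (fun σ : Fin κ → Fin (2*κ) => fA A σ ≤ (κ:ℝ)/8), wp w σ
        ≤ Real.exp (-(κ:ℝ)/2048) := by
    intro A hE
    refine le_trans (tail_bound w hw0 hw1 2 κ (fA A) (fA_bdd A) ((κ:ℝ)/8) (7/288)
      (by norm_num)) ?_
    rw [Real.exp_le_exp]
    have hE' := hE
    nlinarith [hE']
  have e1 := htail T hmeanT
  have e2 := htail Tᶜ hmeanTc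
  -- assemble
  set good := Finset.univ.filter (fun σ : Fin κ → Fin (2*κ) =>
    (κ:ℝ)/8 ≤ fA T σ ∧ (κ:ℝ)/8 ≤ fA Tᶜ σ) with hgood
  have hsplit := Finset.sum_filter_add_sum_filter_not Finset.univ
    (fun σ : Fin κ → Fin (2*κ) => (κ:ℝ)/8 ≤ fA T σ ∧ (κ:ℝ)/8 ≤ fA Tᶜ σ) (wp w)
  rw [sum_wp_univ w hw1 κ] at hsplit
  have hbad : ∑ σ ∈ Finset.univ.filter (fun σ : Fin κ → Fin (2*κ) =>
      ¬((κ:ℝ)/8 ≤ fA T σ ∧ (κ:ℝ)/8 ≤ fA Tᶜ σ)), wp w σ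
      ≤ 2 * Real.exp (-(κ:ℝ)/2048) := by
    set s1 := Finset.univ.filter (fun σ : Fin κ → Fin (2*κ) => fA T σ ≤ (κ:ℝ)/8) with hs1
    set s2 := Finset.univ.filter (fun σ : Fin κ → Fin (2*κ) => fA Tᶜ σ ≤ (κ:ℝ)/8) with hs2
    have hsub : Finset.univ.filter (fun σ : Fin κ → Fin (2*κ) =>
        ¬((κ:ℝ)/8 ≤ fA T σ ∧ (κ:ℝ)/8 ≤ fA Tᶜ σ)) ⊆ s1 ∪ s2 := by
      intro σ hσ
      rw [Finset.mem_filter] at hσ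
      rw [Finset.mem_union, hs1, hs2, Finset.mem_filter, Finset.mem_filter]
      push_neg at hσ
      by_cases h : (κ:ℝ)/8 ≤ fA T σ
      · exact Or.inr ⟨Finset.mem_univ _, le_of_lt (hσ.2 h)⟩
      · exact Or.inl ⟨Finset.mem_univ _, le_of_lt (lt_of_not_ge h)⟩
    calc ∑ σ ∈ Finset.univ.filter (fun σ : Fin κ → Fin (2*κ) =>
          ¬((κ:ℝ)/8 ≤ fA T σ ∧ (κ:ℝ)/8 ≤ fA Tᶜ σ)), wp w σ
        ≤ ∑ σ ∈ s1 ∪ s2, wp w σ :=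
          Finset.sum_le_sum_of_subset_of_nonneg hsub (fun σ _ _ => wp_nonneg hw0 σ)
      _ ≤ ∑ σ ∈ s1, wp w σ + ∑ σ ∈ s2, wp w σ := by
          have h := Finset.sum_union_inter (s₁ := s1) (s₂ := s2) (f := wp w)
          have hnn : 0 ≤ ∑ σ ∈ s1 ∩ s2, wp w σ :=
            Finset.sum_nonneg fun σ _ => wp_nonneg hw0 σ
          linarith
      _ ≤ 2 * Real.exp (-(κ:ℝ)/2048) := by
          rw [hs1, hs2]
          linarith [e1, e2]
  linarith [hsplit, hbad]

end SampleCover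

open MeasureTheory Metric
open scoped ENNReal

/-- With probability at least `1 − 4·exp(−κ/2048)`, a sample of `κ` i.i.d. points from
`p_T` covers `T`: at least `κ/8` circles indexed in `T` and at least `κ/8` circles indexed
outside `T` contain exactly one sample point. -/
theorem sample_covers_T_whp (d κ : ℕ) (hκ : 0 < κ)
    (T : Finset (Fin (2 * κ))) (hT : T.card = κ)
    (c u v : Fin (2 * κ) → EuclideanSpace ℝ (Fin d))
    (hu : ∀ i, ‖u i‖ = 1) (hv : ∀ i, ‖v i‖ = 1) (huv : ∀ i, (inner ℝ (u i) (v i) : ℝ) = 0)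
    (circ : Fin (2 * κ) → ℝ → EuclideanSpace ℝ (Fin d))
    (hcirc : ∀ i θ, circ i θ = c i + Real.cos θ • u i + Real.sin θ • v i)
    (hsep : ∀ i j θ θ', i ≠ j → 3 ≤ dist (circ i θ) (circ j θ'))
    (pT : Measure (EuclideanSpace ℝ (Fin d)))
    (hpT : pT = ∑ i : Fin (2 * κ),
      (ENNReal.ofReal (if i ∈ T then (1 : ℝ) / (3 * κ) else 2 / (3 * κ))) •
        ((ENNReal.ofReal (2 * Real.pi))⁻¹ •
          Measure.map (circ i) (volume.restrict (Set.Ioc 0 (2 * Real.pi)))))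
    [IsProbabilityMeasure pT]
    (μ : Measure (Fin κ → EuclideanSpace ℝ (Fin d)))
    (hμ : μ = Measure.pi (fun _ : Fin κ => pT)) :
    1 - 4 * Real.exp (-(κ : ℝ) / 2048) ≤
      (μ {f | (κ : ℝ) / 8 ≤
            ({i | i ∈ T ∧ {j : Fin κ | f j ∈ Set.range (circ i)}.ncard = 1}.ncard : ℝ) ∧
          (κ : ℝ) / 8 ≤
            ({i | i ∉ T ∧ {j : Fin κ | f j ∈ Set.range (circ i)}.ncard = 1}.ncard : ℝ)}).toReal := by
  haveI : IsProbabilityMeasure μ := by rw [hμ]; infer_instance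
  haveI : Nonempty (Fin (2*κ)) := Fin.pos_iff_nonempty.mp (by omega)
  have h2π : (0:ℝ) < 2 * Real.pi := by positivity
  set R : Fin (2*κ) → Set (EuclideanSpace ℝ (Fin d)) := fun i => Set.range (circ i) with hR
  have hcont : ∀ i, Continuous (circ i) := by
    intro i
    have : circ i = fun θ => c i + Real.cos θ • u i + Real.sin θ • v i := funext (hcirc i)
    rw [this]
    fun_prop
  have hrange : ∀ i, R i = circ i '' Set.Icc 0 (2*Real.pi) := by
    intro i
    apply Set.Subset.antisymm
    · rintro x ⟨θ, rfl⟩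
      set θ' := toIcoMod h2π 0 θ with hθ'
      have hmem : θ' ∈ Set.Ico 0 (2*Real.pi) := by
        have := toIcoMod_mem_Ico h2π 0 θ
        rwa [zero_add] at this
      refine ⟨θ', ⟨hmem.1, le_of_lt hmem.2⟩, ?_⟩
      have hshift : θ' = θ + ((-(toIcoDiv h2π 0 θ) : ℤ) : ℝ) * (2*Real.pi) := by
        rw [hθ', toIcoMod, zsmul_eq_mul]
        push_cast
        ring
      have hcos : Real.cos θ' = Real.cos θ := by
        rw [hshift, Real.cos_add_int_mul_two_pi]
      have hsin : Real.sin θ' = Real.sin θ := by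
        rw [hshift, Real.sin_add_int_mul_two_pi]
      rw [hcirc i θ', hcirc i θ, hcos, hsin]
    · rintro x ⟨θ, _, rfl⟩
      exact ⟨θ, rfl⟩
  have hRmeas : ∀ i, MeasurableSet (R i) := fun i => by
    rw [hrange i]
    exact ((isCompact_Icc.image (hcont i)).isClosed).measurableSet
  have hRdisj : ∀ i j, i ≠ j → ∀ x, x ∈ R i → x ∈ R j → False := by
    intro i j hij x hxi hxj
    obtain ⟨θ, hθ⟩ := hxi
    obtain ⟨θ', hθ'⟩ := hxj
    have h3 := hsep i j θ θ' hij
    rw [hθ, hθ', dist_self] at h3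
    linarith
  set q : Fin (2*κ) → ℝ := fun i => if i ∈ T then 1/(3*(κ:ℝ)) else 2/(3*(κ:ℝ)) with hq
  have hq0 : ∀ i, 0 ≤ q i := by
    intro i
    rw [hq]
    by_cases h : i ∈ T <;> simp [h] <;> positivity
  have hpTR : ∀ i, pT (R i) = ENNReal.ofReal (q i) := by
    intro i
    rw [hpT, Measure.finset_sum_apply]
    have hterm : ∀ i' ∈ Finset.univ,
        ((ENNReal.ofReal (if i' ∈ T then (1:ℝ)/(3*κ) else 2/(3*κ))) •
          ((ENNReal.ofReal (2*Real.pi))⁻¹ •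
            Measure.map (circ i') (volume.restrict (Set.Ioc 0 (2*Real.pi))))) (R i)
        = if i' = i then ENNReal.ofReal (q i) else 0 := by
      intro i' _
      rw [Measure.smul_apply, Measure.smul_apply, smul_eq_mul, smul_eq_mul,
        Measure.map_apply (hcont i').measurable (hRmeas i)]
      by_cases hii : i' = i
      · subst hii
        have hpre : circ i' ⁻¹' (R i') = Set.univ := by
          ext θ
          simp only [Set.mem_preimage, Set.mem_univ, iff_true, hR]
          exact ⟨θ, rfl⟩
        rw [hpre, Measure.restrict_apply MeasurableSet.univ, Set.univ_inter, Real.volume_Ioc,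
          sub_zero, if_pos rfl, ENNReal.inv_mul_cancel
            (by simp [ENNReal.ofReal_eq_zero]; linarith) ENNReal.ofReal_ne_top, mul_one]
      · have hpre : circ i' ⁻¹' (R i) = ∅ := by
          ext θ
          simp only [Set.mem_preimage, Set.mem_empty_iff_false, iff_false]
          intro hmem
          exact hRdisj i' i hii (circ i' θ) ⟨θ, rfl⟩ hmem
        rw [hpre, measure_empty, mul_zero, mul_zero, if_neg hii]
    rw [Finset.sum_congr rfl hterm, Finset.sum_ite_eq' Finset.univ i
      (fun _ => ENNReal.ofReal (q i)), if_pos (Finset.mem_univ i)]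
  -- the good event
  set Egood : Finset (Fin κ → Fin (2*κ)) := Finset.univ.filter
    (fun σ : Fin κ → Fin (2*κ) =>
      (κ:ℝ)/8 ≤ SampleCover.fA T σ ∧ (κ:ℝ)/8 ≤ SampleCover.fA Tᶜ σ) with hEgood
  set B : (Fin κ → Fin (2*κ)) → Set (Fin κ → EuclideanSpace ℝ (Fin d)) :=
    fun σ => Set.univ.pi (fun j => R (σ j)) with hB
  set Ev : Set (Fin κ → EuclideanSpace ℝ (Fin d)) :=
    {f | (κ : ℝ) / 8 ≤
        ({i | i ∈ T ∧ {j : Fin κ | f j ∈ Set.range (circ i)}.ncard = 1}.ncard : ℝ) ∧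
      (κ : ℝ) / 8 ≤
        ({i | i ∉ T ∧ {j : Fin κ | f j ∈ Set.range (circ i)}.ncard = 1}.ncard : ℝ)} with hEv
  have hBsub : ∀ σ ∈ Egood, B σ ⊆ Ev := by
    intro σ hσ f hf
    rw [hB, Set.mem_pi] at hf
    have hkey : ∀ i, {j : Fin κ | f j ∈ Set.range (circ i)} = {j | σ j = i} := by
      intro i
      ext j
      simp only [Set.mem_setOf_eq]
      constructor
      · intro hji
        by_contra hne
        exact hRdisj (σ j) i hne (f j) (hf j (Set.mem_univ j)) hji
      · rintro rfl
        exact hf j (Set.mem_univ j)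
    have hnc : ∀ i, {j : Fin κ | f j ∈ Set.range (circ i)}.ncard
        = (Finset.univ.filter (fun j => σ j = i)).card := by
      intro i
      rw [hkey i, show {j : Fin κ | σ j = i}
          = ((Finset.univ.filter (fun j => σ j = i) : Finset (Fin κ)) : Set (Fin κ)) by
        ext j; simp]
      exact Set.ncard_coe_finset _
    rw [hEgood, Finset.mem_filter] at hσ
    constructor
    · have hset : {i | i ∈ T ∧ {j : Fin κ | f j ∈ Set.range (circ i)}.ncard = 1}
          = ((T.filter (fun i => (Finset.univ.filter (fun j => σ j = i)).card = 1) :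
              Finset (Fin (2*κ))) : Set (Fin (2*κ))) := by
        ext i
        rw [Set.mem_setOf_eq, Finset.mem_coe, Finset.mem_filter, hnc i]
      rw [hset, Set.ncard_coe_finset]
      exact hσ.2.1
    · have hset : {i | i ∉ T ∧ {j : Fin κ | f j ∈ Set.range (circ i)}.ncard = 1}
          = ((Tᶜ.filter (fun i => (Finset.univ.filter (fun j => σ j = i)).card = 1) :
              Finset (Fin (2*κ))) : Set (Fin (2*κ))) := by
        ext i
        rw [Set.mem_setOf_eq, Finset.mem_coe, Finset.mem_filter, Finset.mem_compl, hnc i]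
      rw [hset, Set.ncard_coe_finset]
      exact hσ.2.2
  have hBdisj : Set.PairwiseDisjoint (↑Egood) B := by
    intro σ _ σ' _ hne
    obtain ⟨j, hj⟩ := Function.ne_iff.mp hne
    simp only [Function.onFun]
    rw [Set.disjoint_left]
    intro f hf hf'
    rw [hB, Set.mem_pi] at hf hf'
    exact hRdisj (σ j) (σ' j) hj (f j) (hf j (Set.mem_univ j)) (hf' j (Set.mem_univ j))
  have hμB : ∀ σ : Fin κ → Fin (2*κ), μ (B σ) = ENNReal.ofReal (SampleCover.wp q σ) := by
    intro σ
    rw [hμ, hB, Measure.pi_pi]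
    rw [Finset.prod_congr rfl (fun j _ => hpTR (σ j))]
    rw [← ENNReal.ofReal_prod_of_nonneg (fun j _ => hq0 (σ j))]
    rfl
  have hmain : ENNReal.ofReal (∑ σ ∈ Egood, SampleCover.wp q σ) ≤ μ Ev := by
    rw [ENNReal.ofReal_sum_of_nonneg (fun σ _ => SampleCover.wp_nonneg hq0 σ)]
    calc ∑ σ ∈ Egood, ENNReal.ofReal (SampleCover.wp q σ)
        = ∑ σ ∈ Egood, μ (B σ) := Finset.sum_congr rfl fun σ _ => (hμB σ).symm
      _ = μ (⋃ σ ∈ Egood, B σ) := (measure_biUnion_finset hBdisj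
          (fun σ _ => MeasurableSet.univ_pi (fun j => hRmeas (σ j)))).symm
      _ ≤ μ Ev := measure_mono (Set.iUnion₂_subset hBsub)
  have hP := SampleCover.combinatorial_main κ hκ T hT
  have hPnn : 0 ≤ ∑ σ ∈ Egood, SampleCover.wp q σ :=
    Finset.sum_nonneg fun σ _ => SampleCover.wp_nonneg hq0 σ
  calc 1 - 4 * Real.exp (-(κ : ℝ) / 2048)
      ≤ 1 - 2 * Real.exp (-(κ : ℝ) / 2048) := by
        have := Real.exp_pos (-(κ : ℝ) / 2048)
        linarith
    _ ≤ ∑ σ ∈ Egood, SampleCover.wp q σ := hP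
    _ = (ENNReal.ofReal (∑ σ ∈ Egood, SampleCover.wp q σ)).toReal :=
        (ENNReal.toReal_ofReal hPnn).symm
    _ ≤ (μ Ev).toReal := ENNReal.toReal_mono (measure_ne_top μ _) hmain
end
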